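/- arXiv:2003.02081 — 9 statements merged into one kernel-verified Lean document; each statement's English description precedes it below -/
import Mathlib

section
/- Optimal relay beamforming under perfect CSI (Lemma 1): Assume u_i ≠ 0 and f_i ≠ 0 for all i. Then the supremum, over all feasible tuples (B_1,…,B_R), of SNR({B_i},{f_i}) equals the supremum, over all c ∈ ℝ^R with 0 ≤ c_i ≤ √(P_i/(‖u_i‖₂² + σ_R²)) for all i, of (∑_{i=1}^R c_i ‖f_i‖₂ ‖u_i‖₂)² / (σ_R² ∑_{i=1}^R c_i² ‖f_i‖₂² + σ_D²). Moreover, if c^♯ attains the latter supremum, then the rank-one matrices B_i = c_i^♯ (conj(f_i)/‖f_i‖₂)(u_i/‖u_i‖₂)ᴴ are feasible and attain the former supremum. -/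
noncomputable section

/-- Euclidean (ℓ²) norm of a complex vector. -/
def vnorm2 {n : ℕ} (v : Fin n → ℂ) : ℝ := Real.sqrt (∑ j, ‖v j‖ ^ 2)

/-- Received SNR of the two-hop AF relay network for relay BF matrices `B`
and second-hop channels `f`. -/
def SNRval (R : ℕ) (M : Fin R → ℕ) (σR2 σD2 : ℝ)
    (u : (i : Fin R) → Fin (M i) → ℂ)
    (B : (i : Fin R) → Matrix (Fin (M i)) (Fin (M i)) ℂ)
    (f : (i : Fin R) → Fin (M i) → ℂ) : ℝ :=
  ‖∑ i, ∑ j, ∑ k, f i j * B i j k * u i k‖ ^ 2 /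
    (σD2 + σR2 * ∑ i, ∑ k, ‖∑ j, B i j k * f i j‖ ^ 2)

/-- Feasibility: per-relay power constraints `‖B_i u_i‖² + σ_R² tr(B_iᴴ B_i) ≤ P_i`. -/
def FeasibleB (R : ℕ) (M : Fin R → ℕ) (σR2 : ℝ) (P : Fin R → ℝ)
    (u : (i : Fin R) → Fin (M i) → ℂ)
    (B : (i : Fin R) → Matrix (Fin (M i)) (Fin (M i)) ℂ) : Prop :=
  ∀ i, (∑ j, ‖∑ k, B i j k * u i k‖ ^ 2) + σR2 * ∑ j, ∑ k, ‖B i j k‖ ^ 2 ≤ P i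

lemma vnorm2_nonneg {n : ℕ} (v : Fin n → ℂ) : 0 ≤ vnorm2 v := Real.sqrt_nonneg _

lemma vnorm2_sq {n : ℕ} (v : Fin n → ℂ) : vnorm2 v ^ 2 = ∑ j, ‖v j‖ ^ 2 :=
  Real.sq_sqrt (Finset.sum_nonneg fun _ _ => sq_nonneg _)

lemma vnorm2_pos {n : ℕ} {v : Fin n → ℂ} (hv : v ≠ 0) : 0 < vnorm2 v := by
  apply Real.sqrt_pos.mpr
  obtain ⟨j, hj⟩ : ∃ j, v j ≠ 0 := by
    by_contra h; push_neg at h; exact hv (funext h)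
  exact Finset.sum_pos' (fun _ _ => sq_nonneg _)
    ⟨j, Finset.mem_univ _, pow_pos (norm_pos_iff.mpr hj) 2⟩

lemma cs_complex {n : ℕ} (a b : Fin n → ℂ) :
    ‖∑ j, a j * b j‖ ≤ vnorm2 a * vnorm2 b := by
  calc ‖∑ j, a j * b j‖ ≤ ∑ j, ‖a j‖ * ‖b j‖ := by
        refine (norm_sum_le _ _).trans (le_of_eq ?_)
        simp [norm_mul]
    _ ≤ Real.sqrt (∑ j, ‖a j‖ ^ 2) * Real.sqrt (∑ j, ‖b j‖ ^ 2) :=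
        Real.sum_mul_le_sqrt_mul_sqrt _ _ _
    _ = vnorm2 a * vnorm2 b := by unfold vnorm2; simp

lemma sum_mul_conj {n : ℕ} (v : Fin n → ℂ) :
    ∑ j, v j * (starRingEnd ℂ) (v j) = ((vnorm2 v ^ 2 : ℝ) : ℂ) := by
  rw [vnorm2_sq]; push_cast
  refine Finset.sum_congr rfl fun j _ => ?_
  rw [Complex.mul_conj']

section perRelay

variable {m : ℕ} (c : ℝ) (f u : Fin m → ℂ)

/-- the rank-one matrix -/
def Bc : Fin m → Fin m → ℂ := fun j k =>
  (c : ℂ) * ((starRingEnd ℂ) (f j) / (vnorm2 f : ℂ)) *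
    ((starRingEnd ℂ) (u k) / (vnorm2 u : ℂ))

variable (hf : f ≠ 0) (hu : u ≠ 0)

lemma Bc_num (hf : f ≠ 0) (hu : u ≠ 0) :
    ∑ j, ∑ k, f j * Bc c f u j k * u k = ((c * vnorm2 f * vnorm2 u : ℝ) : ℂ) := by
  have hnf : ((vnorm2 f : ℝ) : ℂ) ≠ 0 := by
    exact_mod_cast (vnorm2_pos hf).ne'
  have hnu : ((vnorm2 u : ℝ) : ℂ) ≠ 0 := by
    exact_mod_cast (vnorm2_pos hu).ne'
  have e : ∀ j k, f j * Bc c f u j k * u k =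
      (((c : ℂ) / ((vnorm2 f : ℂ) * (vnorm2 u : ℂ))) * (f j * (starRingEnd ℂ) (f j))) *
        (u k * (starRingEnd ℂ) (u k)) := by
    intro j k; unfold Bc; ring
  simp_rw [e, ← Finset.mul_sum, ← Finset.sum_mul, ← Finset.mul_sum]
  rw [sum_mul_conj f, sum_mul_conj u]
  push_cast
  field_simp

lemma Bc_col (hf : f ≠ 0) (hu : u ≠ 0) (k : Fin m) :
    ∑ j, Bc c f u j k * f j = ((c * vnorm2 f / vnorm2 u : ℝ) : ℂ) * (starRingEnd ℂ) (u k) := by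
  have hnf : ((vnorm2 f : ℝ) : ℂ) ≠ 0 := by exact_mod_cast (vnorm2_pos hf).ne'
  have hnu : ((vnorm2 u : ℝ) : ℂ) ≠ 0 := by exact_mod_cast (vnorm2_pos hu).ne'
  have e : ∀ j, Bc c f u j k * f j =
      (((c : ℂ) / ((vnorm2 f : ℂ) * (vnorm2 u : ℂ))) * (starRingEnd ℂ) (u k)) *
        (f j * (starRingEnd ℂ) (f j)) := by
    intro j; unfold Bc; ring
  simp_rw [e, ← Finset.mul_sum]
  rw [sum_mul_conj f]
  push_cast
  field_simp

lemma Bc_row (hf : f ≠ 0) (hu : u ≠ 0) (j : Fin m) :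
    ∑ k, Bc c f u j k * u k = ((c * vnorm2 u / vnorm2 f : ℝ) : ℂ) * (starRingEnd ℂ) (f j) := by
  have hnf : ((vnorm2 f : ℝ) : ℂ) ≠ 0 := by exact_mod_cast (vnorm2_pos hf).ne'
  have hnu : ((vnorm2 u : ℝ) : ℂ) ≠ 0 := by exact_mod_cast (vnorm2_pos hu).ne'
  have e : ∀ k, Bc c f u j k * u k =
      (((c : ℂ) / ((vnorm2 f : ℂ) * (vnorm2 u : ℂ))) * (starRingEnd ℂ) (f j)) *
        (u k * (starRingEnd ℂ) (u k)) := by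
    intro k; unfold Bc; ring
  simp_rw [e, ← Finset.mul_sum]
  rw [sum_mul_conj u]
  push_cast
  field_simp

lemma Bc_den (hf : f ≠ 0) (hu : u ≠ 0) :
    ∑ k, ‖∑ j, Bc c f u j k * f j‖ ^ 2 = c ^ 2 * (vnorm2 f) ^ 2 := by
  have hnu : (vnorm2 u) ≠ 0 := (vnorm2_pos hu).ne'
  simp_rw [Bc_col c f u hf hu, norm_mul, Complex.norm_real, RCLike.norm_conj,
    Real.norm_eq_abs, mul_pow, sq_abs, ← Finset.mul_sum, ← vnorm2_sq]
  field_simp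

lemma Bc_pow1 (hf : f ≠ 0) (hu : u ≠ 0) :
    ∑ j, ‖∑ k, Bc c f u j k * u k‖ ^ 2 = c ^ 2 * (vnorm2 u) ^ 2 := by
  have hnf : (vnorm2 f) ≠ 0 := (vnorm2_pos hf).ne'
  simp_rw [Bc_row c f u hf hu, norm_mul, Complex.norm_real, RCLike.norm_conj,
    Real.norm_eq_abs, mul_pow, sq_abs, ← Finset.mul_sum, ← vnorm2_sq]
  field_simp

lemma Bc_pow2 (hf : f ≠ 0) (hu : u ≠ 0) :
    ∑ j, ∑ k, ‖Bc c f u j k‖ ^ 2 = c ^ 2 := by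
  have hnf : (vnorm2 f) ≠ 0 := (vnorm2_pos hf).ne'
  have hnu : (vnorm2 u) ≠ 0 := (vnorm2_pos hu).ne'
  have e : ∀ j k, ‖Bc c f u j k‖ ^ 2 =
      (c ^ 2 / ((vnorm2 f) ^ 2 * (vnorm2 u) ^ 2)) * (‖f j‖ ^ 2 * ‖u k‖ ^ 2) := by
    intro j k
    unfold Bc
    simp only [norm_mul, norm_div, Complex.norm_real, RCLike.norm_conj, Real.norm_eq_abs,
      abs_of_nonneg (vnorm2_nonneg f), abs_of_nonneg (vnorm2_nonneg u), mul_pow, div_pow, sq_abs]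
    field_simp
  simp_rw [e, ← Finset.mul_sum, ← Finset.sum_mul, ← vnorm2_sq]
  field_simp

end perRelay

theorem stmt0 (R : ℕ) (hR : 1 ≤ R) (M : Fin R → ℕ)
    (u f : (i : Fin R) → Fin (M i) → ℂ)
    (σR2 σD2 : ℝ) (hσR : 0 < σR2) (hσD : 0 < σD2)
    (P : Fin R → ℝ) (hP : ∀ i, 0 < P i)
    (hu : ∀ i, u i ≠ 0) (hf : ∀ i, f i ≠ 0) :
    (sSup {s : ℝ | ∃ B, FeasibleB R M σR2 P u B ∧ s = SNRval R M σR2 σD2 u B f} =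
      sSup {s : ℝ | ∃ c : Fin R → ℝ,
        (∀ i, 0 ≤ c i ∧ c i ≤ Real.sqrt (P i / ((vnorm2 (u i)) ^ 2 + σR2))) ∧
        s = (∑ i, c i * vnorm2 (f i) * vnorm2 (u i)) ^ 2 /
              (σR2 * ∑ i, (c i) ^ 2 * (vnorm2 (f i)) ^ 2 + σD2)}) ∧
    (∀ c : Fin R → ℝ,
      (∀ i, 0 ≤ c i ∧ c i ≤ Real.sqrt (P i / ((vnorm2 (u i)) ^ 2 + σR2))) →
      (∑ i, c i * vnorm2 (f i) * vnorm2 (u i)) ^ 2 /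
          (σR2 * ∑ i, (c i) ^ 2 * (vnorm2 (f i)) ^ 2 + σD2) =
        sSup {s : ℝ | ∃ c' : Fin R → ℝ,
          (∀ i, 0 ≤ c' i ∧ c' i ≤ Real.sqrt (P i / ((vnorm2 (u i)) ^ 2 + σR2))) ∧
          s = (∑ i, c' i * vnorm2 (f i) * vnorm2 (u i)) ^ 2 /
                (σR2 * ∑ i, (c' i) ^ 2 * (vnorm2 (f i)) ^ 2 + σD2)} →
      FeasibleB R M σR2 P u (fun i => fun j k =>
          (c i : ℂ) * ((starRingEnd ℂ) (f i j) / (vnorm2 (f i) : ℂ)) *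
            ((starRingEnd ℂ) (u i k) / (vnorm2 (u i) : ℂ))) ∧
      SNRval R M σR2 σD2 u (fun i => fun j k =>
          (c i : ℂ) * ((starRingEnd ℂ) (f i j) / (vnorm2 (f i) : ℂ)) *
            ((starRingEnd ℂ) (u i k) / (vnorm2 (u i) : ℂ))) f =
        sSup {s : ℝ | ∃ B, FeasibleB R M σR2 P u B ∧ s = SNRval R M σR2 σD2 u B f}) := by
  have hnf : ∀ i, 0 < vnorm2 (f i) := fun i => vnorm2_pos (hf i)
  have hnu : ∀ i, 0 < vnorm2 (u i) := fun i => vnorm2_pos (hu i)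
  have hd : ∀ i, 0 < (vnorm2 (u i)) ^ 2 + σR2 := fun i => by positivity
  -- abbreviations
  set g : (Fin R → ℝ) → ℝ := fun c =>
    (∑ i, c i * vnorm2 (f i) * vnorm2 (u i)) ^ 2 /
      (σR2 * ∑ i, (c i) ^ 2 * (vnorm2 (f i)) ^ 2 + σD2) with hgdef
  have hOk0 : ∀ i : Fin R, 0 ≤ (0:ℝ) ∧ (0:ℝ) ≤ Real.sqrt (P i / ((vnorm2 (u i)) ^ 2 + σR2)) :=
    fun i => ⟨le_refl _, Real.sqrt_nonneg _⟩
  -- KEY 1 : achievability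
  have key1 : ∀ c : Fin R → ℝ,
      (∀ i, 0 ≤ c i ∧ c i ≤ Real.sqrt (P i / ((vnorm2 (u i)) ^ 2 + σR2))) →
      FeasibleB R M σR2 P u (fun i => Bc (c i) (f i) (u i)) ∧
      SNRval R M σR2 σD2 u (fun i => Bc (c i) (f i) (u i)) f = g c := by
    intro c hc
    have hcsq : ∀ i, (c i) ^ 2 ≤ P i / ((vnorm2 (u i)) ^ 2 + σR2) := by
      intro i
      calc (c i) ^ 2 ≤ (Real.sqrt (P i / ((vnorm2 (u i)) ^ 2 + σR2))) ^ 2 :=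
            pow_le_pow_left₀ (hc i).1 (hc i).2 2
        _ = P i / ((vnorm2 (u i)) ^ 2 + σR2) :=
            Real.sq_sqrt (div_nonneg (hP i).le (hd i).le)
    constructor
    · intro i
      rw [Bc_pow1 (c i) (f i) (u i) (hf i) (hu i), Bc_pow2 (c i) (f i) (u i) (hf i) (hu i)]
      have h2 : (c i) ^ 2 * ((vnorm2 (u i)) ^ 2 + σR2) ≤ P i :=
        (le_div_iff₀ (hd i)).mp (hcsq i)
      nlinarith [h2]
    · unfold SNRval
      have hN : ∑ i, ∑ j, ∑ k, f i j * Bc (c i) (f i) (u i) j k * u i k =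
          ((∑ i, c i * vnorm2 (f i) * vnorm2 (u i) : ℝ) : ℂ) := by
        rw [Complex.ofReal_sum]
        exact Finset.sum_congr rfl fun i _ => Bc_num (c i) (f i) (u i) (hf i) (hu i)
      rw [hN]
      have hD : ∑ i, ∑ k, ‖∑ j, Bc (c i) (f i) (u i) j k * f i j‖ ^ 2 =
          ∑ i, (c i) ^ 2 * (vnorm2 (f i)) ^ 2 :=
        Finset.sum_congr rfl fun i _ => Bc_den (c i) (f i) (u i) (hf i) (hu i)
      rw [hD]
      have hnn : 0 ≤ ∑ i, c i * vnorm2 (f i) * vnorm2 (u i) :=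
        Finset.sum_nonneg fun i _ =>
          mul_nonneg (mul_nonneg (hc i).1 (vnorm2_nonneg _)) (vnorm2_nonneg _)
      rw [Complex.norm_real, Real.norm_eq_abs, abs_of_nonneg hnn, hgdef]
      ring_nf
  -- KEY 2 : converse
  have key2 : ∀ B, FeasibleB R M σR2 P u B →
      ∃ c : Fin R → ℝ,
        (∀ i, 0 ≤ c i ∧ c i ≤ Real.sqrt (P i / ((vnorm2 (u i)) ^ 2 + σR2))) ∧
        SNRval R M σR2 σD2 u B f ≤ g c := by
    intro B hB
    set num : Fin R → ℂ := fun i => ∑ j, ∑ k, f i j * B i j k * u i k with hnumdef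
    set c : Fin R → ℝ := fun i => ‖num i‖ / (vnorm2 (f i) * vnorm2 (u i)) with hcdef
    have hc0 : ∀ i, 0 ≤ c i := fun i => by
      apply div_nonneg (norm_nonneg _) (mul_nonneg (vnorm2_nonneg _) (vnorm2_nonneg _))
    set s1 : Fin R → ℝ := fun i => ∑ j, ‖∑ k, B i j k * u i k‖ ^ 2 with hs1def
    set s2 : Fin R → ℝ := fun i => ∑ j, ∑ k, ‖B i j k‖ ^ 2 with hs2def
    set D : Fin R → ℝ := fun i => ∑ k, ‖∑ j, B i j k * f i j‖ ^ 2 with hDdef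
    have hs1nn : ∀ i, 0 ≤ s1 i := fun i => Finset.sum_nonneg fun _ _ => sq_nonneg _
    have hs2nn : ∀ i, 0 ≤ s2 i := fun i =>
      Finset.sum_nonneg fun _ _ => Finset.sum_nonneg fun _ _ => sq_nonneg _
    have hDnn : ∀ i, 0 ≤ D i := fun i => Finset.sum_nonneg fun _ _ => sq_nonneg _
    -- num as single sums
    have hnum1 : ∀ i, ‖num i‖ ^ 2 ≤ (vnorm2 (f i)) ^ 2 * s1 i := by
      intro i
      have e : num i = ∑ j, f i j * (∑ k, B i j k * u i k) := by
        refine Finset.sum_congr rfl fun j _ => ?_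
        rw [Finset.mul_sum]
        exact Finset.sum_congr rfl fun k _ => by ring
      have h := cs_complex (f i) (fun j => ∑ k, B i j k * u i k)
      rw [← e] at h
      have h2 : ‖num i‖ ^ 2 ≤ (vnorm2 (f i) * vnorm2 (fun j => ∑ k, B i j k * u i k)) ^ 2 :=
        pow_le_pow_left₀ (norm_nonneg _) h 2
      rw [mul_pow, vnorm2_sq (fun j => ∑ k, B i j k * u i k)] at h2
      exact h2
    have hs1s2 : ∀ i, s1 i ≤ s2 i * (vnorm2 (u i)) ^ 2 := by
      intro i
      calc s1 i ≤ ∑ j, (∑ k, ‖B i j k‖ ^ 2) * (vnorm2 (u i)) ^ 2 := by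
            refine Finset.sum_le_sum fun j _ => ?_
            have h := cs_complex (fun k => B i j k) (u i)
            have h2 : ‖∑ k, B i j k * u i k‖ ^ 2 ≤
                (vnorm2 (fun k => B i j k) * vnorm2 (u i)) ^ 2 :=
              pow_le_pow_left₀ (norm_nonneg _) h 2
            rw [mul_pow, vnorm2_sq (fun k => B i j k)] at h2
            exact h2
        _ = s2 i * (vnorm2 (u i)) ^ 2 := by rw [← Finset.sum_mul]
    have hnum2 : ∀ i, ‖num i‖ ^ 2 ≤ D i * (vnorm2 (u i)) ^ 2 := by
      intro i
      have e : num i = ∑ k, (∑ j, B i j k * f i j) * u i k := by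
        rw [hnumdef]
        simp only
        rw [Finset.sum_comm]
        refine Finset.sum_congr rfl fun k _ => ?_
        rw [Finset.sum_mul]
        exact Finset.sum_congr rfl fun j _ => by ring
      have h := cs_complex (fun k => ∑ j, B i j k * f i j) (u i)
      rw [← e] at h
      have h2 : ‖num i‖ ^ 2 ≤
          (vnorm2 (fun k => ∑ j, B i j k * f i j) * vnorm2 (u i)) ^ 2 :=
        pow_le_pow_left₀ (norm_nonneg _) h 2
      rw [mul_pow] at h2
      have hv : (vnorm2 (fun k => ∑ j, B i j k * f i j)) ^ 2 = D i :=
        vnorm2_sq _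
      rw [hv] at h2
      exact h2
    have hkey : ∀ i, ‖num i‖ ^ 2 * ((vnorm2 (u i)) ^ 2 + σR2) ≤
        (vnorm2 (f i)) ^ 2 * (vnorm2 (u i)) ^ 2 * P i := by
      intro i
      have hfeas := hB i
      have A : ‖num i‖ ^ 2 * (vnorm2 (u i)) ^ 2 ≤
          (vnorm2 (f i)) ^ 2 * s1 i * (vnorm2 (u i)) ^ 2 :=
        mul_le_mul_of_nonneg_right (hnum1 i) (sq_nonneg _)
      have B2 : ‖num i‖ ^ 2 * σR2 ≤
          (vnorm2 (f i)) ^ 2 * (s2 i * (vnorm2 (u i)) ^ 2) * σR2 :=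
        mul_le_mul_of_nonneg_right
          ((hnum1 i).trans (mul_le_mul_of_nonneg_left (hs1s2 i) (sq_nonneg _))) hσR.le
      have C : (vnorm2 (f i)) ^ 2 * (vnorm2 (u i)) ^ 2 * (s1 i + σR2 * s2 i) ≤
          (vnorm2 (f i)) ^ 2 * (vnorm2 (u i)) ^ 2 * P i :=
        mul_le_mul_of_nonneg_left hfeas (by positivity)
      nlinarith [A, B2, C]
    have hcOk : ∀ i, 0 ≤ c i ∧ c i ≤ Real.sqrt (P i / ((vnorm2 (u i)) ^ 2 + σR2)) := by
      intro i
      refine ⟨hc0 i, ?_⟩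
      have h2 : (c i) ^ 2 ≤ P i / ((vnorm2 (u i)) ^ 2 + σR2) := by
        rw [hcdef]
        simp only
        rw [div_pow, div_le_div_iff₀ (pow_pos (mul_pos (hnf i) (hnu i)) 2) (hd i)]
        calc ‖num i‖ ^ 2 * ((vnorm2 (u i)) ^ 2 + σR2) ≤
            (vnorm2 (f i)) ^ 2 * (vnorm2 (u i)) ^ 2 * P i := hkey i
          _ = P i * (vnorm2 (f i) * vnorm2 (u i)) ^ 2 := by ring
      calc c i = Real.sqrt ((c i) ^ 2) := (Real.sqrt_sq (hc0 i)).symm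
        _ ≤ Real.sqrt (P i / ((vnorm2 (u i)) ^ 2 + σR2)) := Real.sqrt_le_sqrt h2
    refine ⟨c, hcOk, ?_⟩
    have hcval : ∀ i, c i * vnorm2 (f i) * vnorm2 (u i) = ‖num i‖ := by
      intro i
      rw [hcdef]
      field_simp [(hnf i).ne', (hnu i).ne']
    have hDge : ∀ i, (c i) ^ 2 * (vnorm2 (f i)) ^ 2 ≤ D i := by
      intro i
      have : (c i) ^ 2 * (vnorm2 (f i)) ^ 2 = ‖num i‖ ^ 2 / (vnorm2 (u i)) ^ 2 := by
        rw [hcdef]; field_simp [(hnf i).ne', (hnu i).ne']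
      rw [this, div_le_iff₀ (pow_pos (hnu i) 2)]
      exact hnum2 i
    have hNle : ‖∑ i, num i‖ ^ 2 ≤ (∑ i, c i * vnorm2 (f i) * vnorm2 (u i)) ^ 2 := by
      rw [Finset.sum_congr rfl fun i _ => hcval i]
      exact pow_le_pow_left₀ (norm_nonneg _) (norm_sum_le _ _) 2
    have hDenle : σR2 * ∑ i, (c i) ^ 2 * (vnorm2 (f i)) ^ 2 + σD2 ≤
        σD2 + σR2 * ∑ i, D i := by
      have := Finset.sum_le_sum fun i (_ : i ∈ Finset.univ) => hDge i
      nlinarith [this]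
    have hpos2 : 0 < σR2 * ∑ i, (c i) ^ 2 * (vnorm2 (f i)) ^ 2 + σD2 := by
      have : 0 ≤ σR2 * ∑ i, (c i) ^ 2 * (vnorm2 (f i)) ^ 2 :=
        mul_nonneg hσR.le (Finset.sum_nonneg fun i _ => by positivity)
      linarith
    unfold SNRval
    rw [hgdef]
    exact div_le_div₀ (sq_nonneg _) hNle hpos2 hDenle
  -- KEY 3 : uniform bound
  set K : ℝ := (∑ i, Real.sqrt (P i / ((vnorm2 (u i)) ^ 2 + σR2)) *
      vnorm2 (f i) * vnorm2 (u i)) ^ 2 / σD2 with hKdef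
  have key3 : ∀ c : Fin R → ℝ,
      (∀ i, 0 ≤ c i ∧ c i ≤ Real.sqrt (P i / ((vnorm2 (u i)) ^ 2 + σR2))) →
      g c ≤ K := by
    intro c hc
    have hnn : 0 ≤ ∑ i, Real.sqrt (P i / ((vnorm2 (u i)) ^ 2 + σR2)) *
        vnorm2 (f i) * vnorm2 (u i) :=
      Finset.sum_nonneg fun i _ =>
        mul_nonneg (mul_nonneg (Real.sqrt_nonneg _) (vnorm2_nonneg _)) (vnorm2_nonneg _)
    have hnum : (∑ i, c i * vnorm2 (f i) * vnorm2 (u i)) ^ 2 ≤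
        (∑ i, Real.sqrt (P i / ((vnorm2 (u i)) ^ 2 + σR2)) * vnorm2 (f i) * vnorm2 (u i)) ^ 2 := by
      refine pow_le_pow_left₀ (Finset.sum_nonneg fun i _ =>
        mul_nonneg (mul_nonneg (hc i).1 (vnorm2_nonneg _)) (vnorm2_nonneg _)) ?_ 2
      refine Finset.sum_le_sum fun i _ => ?_
      have := (hc i).2
      have h1 : 0 ≤ vnorm2 (f i) * vnorm2 (u i) :=
        mul_nonneg (vnorm2_nonneg _) (vnorm2_nonneg _)
      calc c i * vnorm2 (f i) * vnorm2 (u i) = c i * (vnorm2 (f i) * vnorm2 (u i)) := by ring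
        _ ≤ Real.sqrt (P i / ((vnorm2 (u i)) ^ 2 + σR2)) * (vnorm2 (f i) * vnorm2 (u i)) :=
          mul_le_mul_of_nonneg_right this h1
        _ = Real.sqrt (P i / ((vnorm2 (u i)) ^ 2 + σR2)) * vnorm2 (f i) * vnorm2 (u i) := by ring
    have hden : σD2 ≤ σR2 * ∑ i, (c i) ^ 2 * (vnorm2 (f i)) ^ 2 + σD2 := by
      have : 0 ≤ σR2 * ∑ i, (c i) ^ 2 * (vnorm2 (f i)) ^ 2 :=
        mul_nonneg hσR.le (Finset.sum_nonneg fun i _ => by positivity)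
      linarith
    rw [hgdef, hKdef]
    exact div_le_div₀ (sq_nonneg _) hnum hσD hden
  -- sets
  set S1 := {s : ℝ | ∃ B, FeasibleB R M σR2 P u B ∧ s = SNRval R M σR2 σD2 u B f} with hS1def
  set S2 := {s : ℝ | ∃ c : Fin R → ℝ,
      (∀ i, 0 ≤ c i ∧ c i ≤ Real.sqrt (P i / ((vnorm2 (u i)) ^ 2 + σR2))) ∧
      s = (∑ i, c i * vnorm2 (f i) * vnorm2 (u i)) ^ 2 /
            (σR2 * ∑ i, (c i) ^ 2 * (vnorm2 (f i)) ^ 2 + σD2)} with hS2def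
  have hS2mem : ∀ c : Fin R → ℝ,
      (∀ i, 0 ≤ c i ∧ c i ≤ Real.sqrt (P i / ((vnorm2 (u i)) ^ 2 + σR2))) → g c ∈ S2 :=
    fun c hc => ⟨c, hc, rfl⟩
  have hS2ne : S2.Nonempty := ⟨g (fun _ => 0), hS2mem _ hOk0⟩
  have hS1ne : S1.Nonempty := by
    refine ⟨SNRval R M σR2 σD2 u (fun i => Bc 0 (f i) (u i)) f,
      fun i => Bc 0 (f i) (u i), (key1 (fun _ => 0) hOk0).1, rfl⟩
  have hS2bdd : BddAbove S2 := by
    refine ⟨K, fun s hs => ?_⟩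
    obtain ⟨c, hc, rfl⟩ := hs
    exact key3 c hc
  have hS1bdd : BddAbove S1 := by
    refine ⟨K, fun s hs => ?_⟩
    obtain ⟨B, hB, rfl⟩ := hs
    obtain ⟨c, hc, hle⟩ := key2 B hB
    exact hle.trans (key3 c hc)
  have hmain : sSup S1 = sSup S2 := by
    apply le_antisymm
    · refine csSup_le hS1ne fun s hs => ?_
      obtain ⟨B, hB, rfl⟩ := hs
      obtain ⟨c, hc, hle⟩ := key2 B hB
      exact hle.trans (le_csSup hS2bdd (hS2mem c hc))
    · refine csSup_le hS2ne fun s hs => ?_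
      obtain ⟨c, hc, rfl⟩ := hs
      refine le_csSup hS1bdd ?_
      exact ⟨fun i => Bc (c i) (f i) (u i), (key1 c hc).1, ((key1 c hc).2).symm⟩
  refine ⟨hmain, ?_⟩
  intro c hc heq
  refine ⟨(key1 c hc).1, ?_⟩
  have := (key1 c hc).2
  rw [show (fun i => fun j k =>
      (c i : ℂ) * ((starRingEnd ℂ) (f i j) / (vnorm2 (f i) : ℂ)) *
        ((starRingEnd ℂ) (u i k) / (vnorm2 (u i) : ℂ))) =
      (fun i => Bc (c i) (f i) (u i)) from rfl]
  rw [this, hmain]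
  exact heq
end
end

section
/- Closed-form optimal power allocation (Corollary 1): Set σ_R² = σ_D² = 1 and assume u_i ≠ 0, f_i ≠ 0, P_i > 0 for all i. Define φ_i := ‖u_i‖₂ √(1+‖u_i‖₂²) / (‖f_i‖₂ √P_i), a_j := ‖f_j‖₂ √P_j / √(1+‖u_j‖₂²), b_j := ‖f_j‖₂ ‖u_j‖₂ √P_j / √(1+‖u_j‖₂²). Let π be a permutation of {1,…,R} such that φ_{π(1)} ≥ φ_{π(2)} ≥ … ≥ φ_{π(R)}, and for 1 ≤ j ≤ R set λ_j := (1 + ∑_{m=1}^j a_{π(m)}²) / (∑_{m=1}^j b_{π(m)}). Let j₀ be the smallest j ∈ {1,…,R} such that λ_j < φ_{π(j+1)}^{-1}, with the convention φ_{π(R+1)}^{-1} := +∞ (so j₀ is well defined). Define c_i^♯ := υ_i √(P_i/(‖u_i‖₂²+1)), where υ_i = 1 if i ∈ {π(1),…,π(j₀)} and υ_i = λ_{j₀} φ_i otherwise. Then c^♯ is an optimal solution of: maximize (∑_{i=1}^R c_i ‖f_i‖₂ ‖u_i‖₂)² / (∑_{i=1}^R c_i² ‖f_i‖₂² + 1)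 over c ∈ ℝ^R subject to 0 ≤ c_i ≤ √(P_i/(1+‖u_i‖₂²)) for all i. -/
noncomputable section

lemma csarith (S X Y : ℝ) (hS : 0 ≤ S) (hX : 0 ≤ X) (hY : 0 ≤ Y) (hcs : S ^ 2 ≤ X * Y) :
    (1 + S) ^ 2 ≤ (X + 1) * (Y + 1) := by
  have t1 : 2 * S ≤ X + Y := by nlinarith [sq_nonneg (X - Y)]
  nlinarith

lemma arith1 (L N' N D' S : ℝ) (hL : 0 < L) (hN : 0 < N) (hD' : 0 < D')
    (hN' : 0 ≤ N') (hS : 0 ≤ S) (h1 : L * N' ≤ 1 + S)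
    (h2 : (1 + S) ^ 2 ≤ (L * N) * D') : N' ^ 2 / D' ≤ N ^ 2 / (L * N) := by
  rw [div_le_div_iff₀ hD' (by positivity)]
  have e1 : (L * N') ^ 2 ≤ (1 + S) ^ 2 := pow_le_pow_left₀ (by positivity) h1 2
  have e2 : (L * N') ^ 2 ≤ L * N * D' := le_trans e1 h2
  have e3' := mul_le_mul_of_nonneg_right e2 hN.le
  have e4 : (L * N') ^ 2 * N = L * (N' ^ 2 * (L * N)) := by ring
  have e5 : L * N * D' * N = L * (N ^ 2 * D') := by ring
  rw [e4, e5] at e3'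
  exact le_of_mul_le_mul_left e3' hL

lemma cor1_abstract {R : ℕ} (φ a b lam C β α : Fin R → ℝ)
    (hCpos : ∀ i, 0 < C i) (hβpos : ∀ i, 0 < β i) (hαpos : ∀ i, 0 < α i)
    (hab : ∀ i, a i = α i * C i) (hbb : ∀ i, b i = β i * C i)
    (hφa : ∀ i, φ i * a i ^ 2 = b i)
    (π : Equiv.Perm (Fin R))
    (hπ : ∀ m m' : Fin R, m ≤ m' → φ (π m') ≤ φ (π m))
    (hlam : ∀ j : Fin R, lam j =
        (1 + ∑ m ∈ Finset.Iic j, (a (π m)) ^ 2) / (∑ m ∈ Finset.Iic j, b (π m)))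
    (j₀ : Fin R)
    (hj₀ : ∀ h : (j₀ : ℕ) + 1 < R, lam j₀ < (φ (π ⟨(j₀ : ℕ) + 1, h⟩))⁻¹)
    (hj₀min : ∀ j : Fin R, j < j₀ →
        ∀ h : (j : ℕ) + 1 < R, ¬ lam j < (φ (π ⟨(j : ℕ) + 1, h⟩))⁻¹)
    (c : Fin R → ℝ)
    (hc : ∀ i, c i = (if π.symm i ≤ j₀ then (1 : ℝ) else lam j₀ * φ i) * C i) :
    (∀ i, 0 ≤ c i ∧ c i ≤ C i) ∧
    (∀ c' : Fin R → ℝ, (∀ i, 0 ≤ c' i ∧ c' i ≤ C i) →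
      (∑ i, c' i * β i) ^ 2 / (∑ i, (c' i) ^ 2 * (α i) ^ 2 + 1) ≤
      (∑ i, c i * β i) ^ 2 / (∑ i, (c i) ^ 2 * (α i) ^ 2 + 1)) := by
  have hapos : ∀ i, 0 < a i := fun i => by rw [hab]; exact mul_pos (hαpos i) (hCpos i)
  have hbpos : ∀ i, 0 < b i := fun i => by rw [hbb]; exact mul_pos (hβpos i) (hCpos i)
  have hφpos : ∀ i, 0 < φ i := by
    intro i
    have h1 := hφa i
    nlinarith [hbpos i, sq_nonneg (a i), hapos i]
  set L : ℝ := lam j₀ with hL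
  set A : ℝ := ∑ m ∈ Finset.Iic j₀, (a (π m)) ^ 2 with hA
  set B : ℝ := ∑ m ∈ Finset.Iic j₀, b (π m) with hB
  have hBpos : 0 < B :=
    Finset.sum_pos (fun m _ => hbpos (π m)) ⟨j₀, Finset.mem_Iic.mpr le_rfl⟩
  have hAnn : 0 ≤ A := Finset.sum_nonneg (fun m _ => sq_nonneg _)
  have hLdef : L = (1 + A) / B := hlam j₀
  have hLpos : 0 < L := by rw [hLdef]; positivity
  have hLB : L * B = 1 + A := by rw [hLdef]; field_simp
  -- the crucial index-j₀ inequality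
  have Qj0 : a (π j₀) ^ 2 ≤ L * b (π j₀) := by
    rcases Nat.eq_zero_or_pos (j₀ : ℕ) with h0 | hpos
    · -- j₀ is the first index
      have hIic : Finset.Iic j₀ = {j₀} := by
        ext m
        simp only [Finset.mem_Iic, Finset.mem_singleton, Fin.le_def, Fin.ext_iff, h0,
          Nat.le_zero]
      have hBs : B = b (π j₀) := by rw [hB, hIic, Finset.sum_singleton]
      have hAs : A = a (π j₀) ^ 2 := by rw [hA, hIic, Finset.sum_singleton]
      rw [hLdef, hBs, hAs]
      rw [div_mul_cancel₀ _ (ne_of_gt (hbpos (π j₀)))]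
      linarith
    · obtain ⟨k, hk⟩ : ∃ k, (j₀ : ℕ) = k + 1 := ⟨(j₀ : ℕ) - 1, by omega⟩
      have hkR : k < R := by have := j₀.isLt; omega
      set j' : Fin R := ⟨k, hkR⟩ with hj'
      have hj'lt : j' < j₀ := by simp [Fin.lt_def, hj', hk]
      have hlt2 : (j' : ℕ) + 1 < R := by simpa [hj', ← hk] using j₀.isLt
      have hmin := hj₀min j' hj'lt hlt2
      have hfin : (⟨(j' : ℕ) + 1, hlt2⟩ : Fin R) = j₀ := by
        apply Fin.ext; simp [hj', hk]
      rw [hfin] at hmin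
      push_neg at hmin
      -- lam j' ≥ φ (π j₀)⁻¹, so a (π j₀)^2 ≤ lam j' * b (π j₀)
      have hstep : a (π j₀) ^ 2 ≤ lam j' * b (π j₀) := by
        have h2 := hφa (π j₀)
        have h3 : (φ (π j₀))⁻¹ * b (π j₀) = a (π j₀) ^ 2 := by
          rw [← h2, inv_mul_cancel_left₀ (ne_of_gt (hφpos (π j₀)))]
        rw [← h3]
        exact mul_le_mul_of_nonneg_right hmin (hbpos (π j₀)).le
      -- split Iic j₀ = insert j₀ (Iic j')
      have hIic : Finset.Iic j₀ = insert j₀ (Finset.Iic j') := by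
        ext m
        simp only [Finset.mem_Iic, Finset.mem_insert, Fin.le_def, Fin.ext_iff, hj', hk]
        omega
      have hnot : j₀ ∉ Finset.Iic j' := by
        simp only [Finset.mem_Iic]; exact not_le.mpr hj'lt
      set A' : ℝ := ∑ m ∈ Finset.Iic j', (a (π m)) ^ 2 with hA'
      set B' : ℝ := ∑ m ∈ Finset.Iic j', b (π m) with hB'
      have hB'pos : 0 < B' :=
        Finset.sum_pos (fun m _ => hbpos (π m)) ⟨j', Finset.mem_Iic.mpr le_rfl⟩
      have hA'nn : 0 ≤ A' := Finset.sum_nonneg (fun m _ => sq_nonneg _)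
      have hAeq : A = a (π j₀) ^ 2 + A' := by rw [hA, hIic, Finset.sum_insert hnot]
      have hBeq : B = b (π j₀) + B' := by rw [hB, hIic, Finset.sum_insert hnot]
      have hlamj' : lam j' = (1 + A') / B' := hlam j'
      rw [hlamj'] at hstep
      have hstep2 : a (π j₀) ^ 2 * B' ≤ (1 + A') * b (π j₀) := by
        rw [div_mul_eq_mul_div, le_div_iff₀ hB'pos] at hstep
        linarith
      rw [hLdef, hAeq, hBeq, div_mul_eq_mul_div, le_div_iff₀ (by linarith)]
      nlinarith [hbpos (π j₀), sq_nonneg (a (π j₀))]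
  -- fact (A)
  have factA : ∀ m : Fin R, m ≤ j₀ → a (π m) ^ 2 ≤ L * b (π m) := by
    have h1 : 1 ≤ L * φ (π j₀) := by
      have h2 := hφa (π j₀)
      rw [← h2] at Qj0
      nlinarith [pow_pos (hapos (π j₀)) 2]
    intro m hm
    have h3 : φ (π j₀) ≤ φ (π m) := hπ m j₀ hm
    have h4 : 1 ≤ L * φ (π m) := le_trans h1 (by nlinarith)
    have h5 := hφa (π m)
    nlinarith [pow_pos (hapos (π m)) 2]
  -- fact (B)
  have factB : ∀ m : Fin R, j₀ < m → L * φ (π m) ≤ 1 := by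
    intro m hm
    have hlt : (j₀ : ℕ) + 1 < R := lt_of_le_of_lt (Nat.succ_le_of_lt hm) m.isLt
    have h1 := hj₀ hlt
    have h2 : φ (π m) ≤ φ (π ⟨(j₀ : ℕ) + 1, hlt⟩) :=
      hπ _ m (by exact Nat.succ_le_of_lt hm)
    have h3 : 0 < φ (π ⟨(j₀ : ℕ) + 1, hlt⟩) := hφpos _
    have h4 : L * φ (π ⟨(j₀ : ℕ) + 1, hlt⟩) < 1 := by
      have h5 := mul_lt_mul_of_pos_right h1 h3
      rwa [inv_mul_cancel₀ (ne_of_gt h3)] at h5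
    nlinarith [hφpos (π m)]
  -- feasibility
  have feas : ∀ i, 0 ≤ c i ∧ c i ≤ C i := by
    intro i
    rw [hc i]
    by_cases h : π.symm i ≤ j₀
    · simp [h, (hCpos i).le]
    · simp only [h, if_false]
      push_neg at h
      have h2 := factB (π.symm i) h
      rw [Equiv.apply_symm_apply] at h2
      constructor
      · have := hφpos i; have := hCpos i; positivity
      · nlinarith [hCpos i, hφpos i]
  refine ⟨feas, ?_⟩
  -- sum splitting helper
  have sum_split : ∀ h : Fin R → ℝ, ∑ i, h i =
      ∑ m ∈ Finset.Iic j₀, h (π m) + ∑ m ∈ (Finset.Iic j₀)ᶜ, h (π m) := by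
    intro h
    rw [← Equiv.sum_comp π h, ← Finset.sum_add_sum_compl (Finset.Iic j₀)]
  -- values of c along π
  have hcT : ∀ m : Fin R, m ≤ j₀ → c (π m) = C (π m) := by
    intro m hm
    rw [hc (π m)]
    simp [Equiv.symm_apply_apply, hm]
  have hcTc : ∀ m : Fin R, ¬ m ≤ j₀ → c (π m) = L * φ (π m) * C (π m) := by
    intro m hm
    rw [hc (π m)]
    simp [Equiv.symm_apply_apply, hm]
  -- D(c) = L * N(c)
  have hDN : ∑ i, (c i) ^ 2 * (α i) ^ 2 + 1 = L * ∑ i, c i * β i := by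
    rw [sum_split (fun i => (c i) ^ 2 * (α i) ^ 2), sum_split (fun i => c i * β i),
      mul_add]
    have e1 : ∑ m ∈ Finset.Iic j₀, (c (π m)) ^ 2 * (α (π m)) ^ 2 + 1 =
        L * ∑ m ∈ Finset.Iic j₀, c (π m) * β (π m) := by
      have l1 : ∑ m ∈ Finset.Iic j₀, (c (π m)) ^ 2 * (α (π m)) ^ 2 = A := by
        apply Finset.sum_congr rfl
        intro m hm
        rw [hcT m (Finset.mem_Iic.mp hm), hab (π m)]
        ring
      have l2 : ∑ m ∈ Finset.Iic j₀, c (π m) * β (π m) = B := by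
        apply Finset.sum_congr rfl
        intro m hm
        rw [hcT m (Finset.mem_Iic.mp hm), hbb (π m)]
        ring
      rw [l1, l2]
      linarith [hLB]
    have e2 : ∑ m ∈ (Finset.Iic j₀)ᶜ, (c (π m)) ^ 2 * (α (π m)) ^ 2 =
        L * ∑ m ∈ (Finset.Iic j₀)ᶜ, c (π m) * β (π m) := by
      rw [Finset.mul_sum]
      apply Finset.sum_congr rfl
      intro m hm
      have hm' : ¬ m ≤ j₀ := by simpa [Finset.mem_compl, Finset.mem_Iic] using hm
      rw [hcTc m hm']
      have h2 := hφa (π m)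
      have h3' : α (π m) ^ 2 * C (π m) ^ 2 = a (π m) ^ 2 := by rw [hab (π m)]; ring
      calc (L * φ (π m) * C (π m)) ^ 2 * α (π m) ^ 2
          = L ^ 2 * φ (π m) ^ 2 * (α (π m) ^ 2 * C (π m) ^ 2) := by ring
        _ = L ^ 2 * φ (π m) ^ 2 * a (π m) ^ 2 := by rw [h3']
        _ = L ^ 2 * φ (π m) * (φ (π m) * a (π m) ^ 2) := by ring
        _ = L ^ 2 * φ (π m) * b (π m) := by rw [h2]
        _ = L ^ 2 * φ (π m) * (β (π m) * C (π m)) := by rw [hbb (π m)]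
        _ = L * (L * φ (π m) * C (π m) * β (π m)) := by ring
    linarith [e1, e2]
  -- positivity of N(c)
  have hNpos : 0 < ∑ i, c i * β i := by
    apply Finset.sum_pos'
    · intro i _
      exact mul_nonneg (feas i).1 (hβpos i).le
    · refine ⟨π j₀, Finset.mem_univ _, ?_⟩
      have : c (π j₀) = C (π j₀) := hcT j₀ le_rfl
      rw [this]
      exact mul_pos (hCpos _) (hβpos _)
  -- the key linear inequality
  have hkey : ∀ c' : Fin R → ℝ, (∀ i, 0 ≤ c' i ∧ c' i ≤ C i) →
      L * (∑ i, c' i * β i) ≤ 1 + ∑ i, (α i) ^ 2 * c i * c' i := by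
    intro c' hc'
    have expand : ∑ i, (L * β i - (α i) ^ 2 * c i) * c' i =
        L * (∑ i, c' i * β i) - ∑ i, (α i) ^ 2 * c i * c' i := by
      rw [Finset.mul_sum, ← Finset.sum_sub_distrib]
      exact Finset.sum_congr rfl fun i _ => by ring
    have hbound : ∑ i, (L * β i - (α i) ^ 2 * c i) * c' i ≤ 1 := by
      rw [sum_split (fun i => (L * β i - (α i) ^ 2 * c i) * c' i)]
      have e2 : ∑ m ∈ (Finset.Iic j₀)ᶜ, (L * β (π m) - (α (π m)) ^ 2 * c (π m)) * c' (π m)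
          = 0 := by
        apply Finset.sum_eq_zero
        intro m hm
        have hm' : ¬ m ≤ j₀ := by simpa [Finset.mem_compl, Finset.mem_Iic] using hm
        have hC0 : C (π m) ≠ 0 := ne_of_gt (hCpos (π m))
        have hz : L * β (π m) - (α (π m)) ^ 2 * c (π m) = 0 := by
          rw [hcTc m hm']
          have h2 := hφa (π m)
          have h3' : α (π m) ^ 2 * C (π m) ^ 2 = a (π m) ^ 2 := by rw [hab (π m)]; ring
          have hz0 : (L * β (π m) - α (π m) ^ 2 * (L * φ (π m) * C (π m))) * C (π m)
              = 0 := by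
            calc (L * β (π m) - α (π m) ^ 2 * (L * φ (π m) * C (π m))) * C (π m)
                = L * (β (π m) * C (π m)) - L * φ (π m) * (α (π m) ^ 2 * C (π m) ^ 2) := by
                  ring
              _ = L * b (π m) - L * φ (π m) * a (π m) ^ 2 := by rw [← hbb (π m), h3']
              _ = L * b (π m) - L * (φ (π m) * a (π m) ^ 2) := by ring
              _ = 0 := by rw [h2]; ring
          exact (mul_eq_zero.mp hz0).resolve_right hC0
        rw [hz, zero_mul]
      have e1 : ∑ m ∈ Finset.Iic j₀, (L * β (π m) - (α (π m)) ^ 2 * c (π m)) * c' (π m)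
          ≤ 1 := by
        have step : ∀ m ∈ Finset.Iic j₀,
            (L * β (π m) - (α (π m)) ^ 2 * c (π m)) * c' (π m) ≤
            L * b (π m) - a (π m) ^ 2 := by
          intro m hm
          have hm' : m ≤ j₀ := Finset.mem_Iic.mp hm
          have hcv := hcT m hm'
          have hco : 0 ≤ L * β (π m) - (α (π m)) ^ 2 * c (π m) := by
            rw [hcv]
            have h1 := factA m hm'
            have h3' : a (π m) ^ 2 = α (π m) ^ 2 * C (π m) ^ 2 := by rw [hab (π m)]; ring
            have h4 := hbb (π m)
            have hC0 : 0 < C (π m) := hCpos (π m)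
            nlinarith [h1, h3', h4, hC0]
          have hcb := (hc' (π m)).2
          have hcn := (hc' (π m)).1
          calc (L * β (π m) - (α (π m)) ^ 2 * c (π m)) * c' (π m)
              ≤ (L * β (π m) - (α (π m)) ^ 2 * c (π m)) * C (π m) :=
                mul_le_mul_of_nonneg_left hcb hco
            _ = L * b (π m) - a (π m) ^ 2 := by
                rw [hcv, hab (π m), hbb (π m)]; ring
        calc ∑ m ∈ Finset.Iic j₀, (L * β (π m) - (α (π m)) ^ 2 * c (π m)) * c' (π m)
            ≤ ∑ m ∈ Finset.Iic j₀, (L * b (π m) - a (π m) ^ 2) :=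
              Finset.sum_le_sum step
          _ = L * B - A := by rw [Finset.sum_sub_distrib, ← Finset.mul_sum]
          _ = 1 := by linarith [hLB]
      linarith [e1, e2]
    linarith [expand ▸ hbound]
  -- Cauchy–Schwarz
  have hCS : ∀ c' : Fin R → ℝ, (∀ i, 0 ≤ c' i ∧ c' i ≤ C i) →
      (1 + ∑ i, (α i) ^ 2 * c i * c' i) ^ 2 ≤
      (∑ i, (c i) ^ 2 * (α i) ^ 2 + 1) * (∑ i, (c' i) ^ 2 * (α i) ^ 2 + 1) := by
    intro c' hc'
    have cs := Finset.sum_mul_sq_le_sq_mul_sq Finset.univ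
      (fun i => α i * c i) (fun i => α i * c' i)
    set S : ℝ := ∑ i, (α i) ^ 2 * c i * c' i with hS
    set X : ℝ := ∑ i, (c i) ^ 2 * (α i) ^ 2 with hX
    set Y : ℝ := ∑ i, (c' i) ^ 2 * (α i) ^ 2 with hY
    have e1 : ∑ i, (α i * c i) * (α i * c' i) = S := by
      apply Finset.sum_congr rfl; intro i _; ring
    have e2 : ∑ i, (α i * c i) ^ 2 = X := by
      apply Finset.sum_congr rfl; intro i _; ring
    have e3 : ∑ i, (α i * c' i) ^ 2 = Y := by
      apply Finset.sum_congr rfl; intro i _; ring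
    rw [e1, e2, e3] at cs
    have hSnn : 0 ≤ S := Finset.sum_nonneg fun i _ =>
      mul_nonneg (mul_nonneg (sq_nonneg _) (feas i).1) (hc' i).1
    have hXnn : 0 ≤ X := Finset.sum_nonneg fun i _ =>
      mul_nonneg (sq_nonneg _) (sq_nonneg _)
    have hYnn : 0 ≤ Y := Finset.sum_nonneg fun i _ =>
      mul_nonneg (sq_nonneg _) (sq_nonneg _)
    exact csarith S X Y hSnn hXnn hYnn cs
  -- conclusion
  intro c' hc'
  have h1 := hkey c' hc'
  have h2 := hCS c' hc'
  have hD'pos : 0 < ∑ i, (c' i) ^ 2 * (α i) ^ 2 + 1 := by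
    have : (0:ℝ) ≤ ∑ i, (c' i) ^ 2 * (α i) ^ 2 :=
      Finset.sum_nonneg fun i _ => mul_nonneg (sq_nonneg _) (sq_nonneg _)
    linarith
  have hN'nn : 0 ≤ ∑ i, c' i * β i :=
    Finset.sum_nonneg fun i _ => mul_nonneg (hc' i).1 (hβpos i).le
  have hSnn : 0 ≤ ∑ i, (α i) ^ 2 * c i * c' i :=
    Finset.sum_nonneg fun i _ =>
      mul_nonneg (mul_nonneg (sq_nonneg _) (feas i).1) (hc' i).1
  have h2' : (1 + ∑ i, (α i) ^ 2 * c i * c' i) ^ 2 ≤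
      (L * ∑ i, c i * β i) * (∑ i, (c' i) ^ 2 * (α i) ^ 2 + 1) := by
    rw [← hDN]; exact h2
  rw [hDN]
  exact arith1 L (∑ i, c' i * β i) (∑ i, c i * β i)
    (∑ i, (c' i) ^ 2 * (α i) ^ 2 + 1) (∑ i, (α i) ^ 2 * c i * c' i)
    hLpos hNpos hD'pos hN'nn hSnn h1 h2'


theorem stmt1 (R : ℕ) (hR : 1 ≤ R) (M : Fin R → ℕ)
    (u f : (i : Fin R) → Fin (M i) → ℂ)
    (P : Fin R → ℝ) (hP : ∀ i, 0 < P i)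
    (hu : ∀ i, u i ≠ 0) (hf : ∀ i, f i ≠ 0)
    -- the quantities φ, a, b, λ of Corollary 1
    (φ a b lam : Fin R → ℝ)
    (hφ : ∀ i, φ i = vnorm2 (u i) * Real.sqrt (1 + (vnorm2 (u i)) ^ 2) /
        (vnorm2 (f i) * Real.sqrt (P i)))
    (ha : ∀ j, a j = vnorm2 (f j) * Real.sqrt (P j) / Real.sqrt (1 + (vnorm2 (u j)) ^ 2))
    (hb : ∀ j, b j = vnorm2 (f j) * vnorm2 (u j) * Real.sqrt (P j) /
        Real.sqrt (1 + (vnorm2 (u j)) ^ 2))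
    -- π sorts the φ's in descending order (`π m` here is `π(m+1)` in 1-based notation)
    (π : Equiv.Perm (Fin R))
    (hπ : ∀ m m' : Fin R, m ≤ m' → φ (π m') ≤ φ (π m))
    -- `lam j` here is `λ_{j+1}` of the paper (1-based index `j+1`)
    (hlam : ∀ j : Fin R, lam j =
        (1 + ∑ m ∈ Finset.Iic j, (a (π m)) ^ 2) / (∑ m ∈ Finset.Iic j, b (π m)))
    -- `j₀` is the smallest (1-based) index `j₀+1` with `λ_j < φ_{π(j+1)}⁻¹`,
    -- with the convention `φ_{π(R+1)}⁻¹ = +∞` (the condition holds vacuously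
    -- at the last index)
    (j₀ : Fin R)
    (hj₀ : ∀ h : (j₀ : ℕ) + 1 < R, lam j₀ < (φ (π ⟨(j₀ : ℕ) + 1, h⟩))⁻¹)
    (hj₀min : ∀ j : Fin R, j < j₀ →
        ∀ h : (j : ℕ) + 1 < R, ¬ lam j < (φ (π ⟨(j : ℕ) + 1, h⟩))⁻¹)
    -- the claimed optimal power allocation
    (c : Fin R → ℝ)
    (hc : ∀ i, c i =
        (if π.symm i ≤ j₀ then (1 : ℝ) else lam j₀ * φ i) *
          Real.sqrt (P i / ((vnorm2 (u i)) ^ 2 + 1))) :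
    (∀ i, 0 ≤ c i ∧ c i ≤ Real.sqrt (P i / (1 + (vnorm2 (u i)) ^ 2))) ∧
    (∀ c' : Fin R → ℝ,
      (∀ i, 0 ≤ c' i ∧ c' i ≤ Real.sqrt (P i / (1 + (vnorm2 (u i)) ^ 2))) →
      (∑ i, c' i * vnorm2 (f i) * vnorm2 (u i)) ^ 2 /
          (∑ i, (c' i) ^ 2 * (vnorm2 (f i)) ^ 2 + 1) ≤
        (∑ i, c i * vnorm2 (f i) * vnorm2 (u i)) ^ 2 /
          (∑ i, (c i) ^ 2 * (vnorm2 (f i)) ^ 2 + 1)) := by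
  have hU : ∀ i, 0 < vnorm2 (u i) := fun i => vnorm2_pos (hu i)
  have hF : ∀ i, 0 < vnorm2 (f i) := fun i => vnorm2_pos (hf i)
  have hsq : ∀ i, 0 < Real.sqrt (1 + vnorm2 (u i) ^ 2) := fun i =>
    Real.sqrt_pos.mpr (by positivity)
  have hsp : ∀ i, 0 < Real.sqrt (P i) := fun i => Real.sqrt_pos.mpr (hP i)
  have hCeq : ∀ i, Real.sqrt (P i / (1 + vnorm2 (u i) ^ 2)) =
      Real.sqrt (P i) / Real.sqrt (1 + vnorm2 (u i) ^ 2) := fun i =>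
    Real.sqrt_div (hP i).le _
  have hCpos : ∀ i, 0 < Real.sqrt (P i / (1 + vnorm2 (u i) ^ 2)) := fun i => by
    rw [hCeq i]; exact div_pos (hsp i) (hsq i)
  have hab : ∀ i, a i = vnorm2 (f i) * Real.sqrt (P i / (1 + vnorm2 (u i) ^ 2)) :=
    fun i => by rw [ha i, hCeq i]; ring
  have hbb : ∀ i, b i = vnorm2 (f i) * vnorm2 (u i) *
      Real.sqrt (P i / (1 + vnorm2 (u i) ^ 2)) :=
    fun i => by rw [hb i, hCeq i]; ring
  have hφa : ∀ i, φ i * a i ^ 2 = b i := by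
    intro i
    rw [hφ i, ha i, hb i]
    have hF0 : vnorm2 (f i) ≠ 0 := ne_of_gt (hF i)
    have hp0 : Real.sqrt (P i) ≠ 0 := ne_of_gt (hsp i)
    have hs0 : Real.sqrt (1 + vnorm2 (u i) ^ 2) ≠ 0 := ne_of_gt (hsq i)
    have hss : Real.sqrt (1 + vnorm2 (u i) ^ 2) * Real.sqrt (1 + vnorm2 (u i) ^ 2)
        = 1 + vnorm2 (u i) ^ 2 := Real.mul_self_sqrt (by positivity)
    field_simp
  have hc' : ∀ i, c i = (if π.symm i ≤ j₀ then (1 : ℝ) else lam j₀ * φ i) *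
      Real.sqrt (P i / (1 + vnorm2 (u i) ^ 2)) := by
    intro i
    rw [hc i, show P i / (vnorm2 (u i) ^ 2 + 1) = P i / (1 + vnorm2 (u i) ^ 2) from
      by ring_nf]
  have key := cor1_abstract φ a b lam
    (fun i => Real.sqrt (P i / (1 + (vnorm2 (u i)) ^ 2)))
    (fun i => vnorm2 (f i) * vnorm2 (u i))
    (fun i => vnorm2 (f i))
    hCpos (fun i => mul_pos (hF i) (hU i)) hF hab hbb hφa π hπ hlam j₀ hj₀ hj₀min c hc'
  refine ⟨key.1, fun c' hfe => ?_⟩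
  have h2 := key.2 c' hfe
  simpa only [mul_assoc] using h2
end
end

section
/- Projection of relay beamformers onto the signal direction: Assume u_i ≠ 0 for all i and set û_i := u_i/‖u_i‖₂. Let (B_1,…,B_R) be any tuple of matrices B_i ∈ ℂ^{M_i×M_i} satisfying the power constraints ‖B_i u_i‖₂² + σ_R² tr(B_iᴴ B_i) ≤ P_i. Define B'_i := B_i û_i û_iᴴ. Then (B'_1,…,B'_R) also satisfies the power constraints, and for every tuple of second-hop channels (f_1,…,f_R) with f_i ∈ ℂ^{M_i}, one has SNR({B'_i},{f_i}) ≥ SNR({B_i},{f_i}). -/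
noncomputable section

/-- Cauchy–Schwarz for complex finite sums. -/
lemma cs_norm {m : ℕ} (v w : Fin m → ℂ) :
    ‖∑ k, v k * w k‖ ^ 2 ≤ (∑ k, ‖v k‖ ^ 2) * (∑ k, ‖w k‖ ^ 2) := by
  have h : ‖∑ k, v k * w k‖ ≤ ∑ k, ‖v k‖ * ‖w k‖ :=
    (norm_sum_le _ _).trans (le_of_eq (Finset.sum_congr rfl fun k _ => norm_mul _ _))
  calc ‖∑ k, v k * w k‖ ^ 2 ≤ (∑ k, ‖v k‖ * ‖w k‖) ^ 2 :=
        pow_le_pow_left₀ (norm_nonneg _) h 2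
    _ ≤ _ := Finset.sum_mul_sq_le_sq_mul_sq _ _ _

lemma key {m : ℕ} (u : Fin m → ℂ) (hu : u ≠ 0) (uh : Fin m → ℂ)
    (huh : ∀ k, uh k = u k / (vnorm2 u : ℂ))
    (B B' : Matrix (Fin m) (Fin m) ℂ)
    (hB' : ∀ j k, B' j k = (∑ l, B j l * uh l) * (starRingEnd ℂ) (uh k)) :
    (∀ j, ∑ k, B' j k * u k = ∑ k, B j k * u k) ∧
    (∑ j, ∑ k, ‖B' j k‖ ^ 2 ≤ ∑ j, ∑ k, ‖B j k‖ ^ 2) ∧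
    (∀ f : Fin m → ℂ, ∑ k, ‖∑ j, B' j k * f j‖ ^ 2 ≤ ∑ k, ‖∑ j, B j k * f j‖ ^ 2) := by
  set n : ℝ := vnorm2 u with hn
  have hs0 : 0 ≤ ∑ k, ‖u k‖ ^ 2 := Finset.sum_nonneg fun _ _ => sq_nonneg _
  have hspos : 0 < ∑ k, ‖u k‖ ^ 2 := by
    obtain ⟨k, hk⟩ := Function.ne_iff.mp hu
    simp only [Pi.zero_apply] at hk
    exact Finset.sum_pos' (fun _ _ => sq_nonneg _)
      ⟨k, Finset.mem_univ k, pow_pos (norm_pos_iff.mpr hk) 2⟩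
  have hnpos : 0 < n := Real.sqrt_pos.mpr hspos
  have hn2 : n ^ 2 = ∑ k, ‖u k‖ ^ 2 := Real.sq_sqrt hs0
  have hnC : (n : ℂ) ≠ 0 := by exact_mod_cast hnpos.ne'
  have hunit : ∑ k, ‖uh k‖ ^ 2 = 1 := by
    have h1 : ∀ k ∈ Finset.univ, ‖uh k‖ ^ 2 = ‖u k‖ ^ 2 / n ^ 2 := by
      intro k _
      rw [huh, norm_div, Complex.norm_real, Real.norm_eq_abs, abs_of_pos hnpos, div_pow]
    rw [Finset.sum_congr rfl h1, ← Finset.sum_div, ← hn2, div_self (by positivity)]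
  have hconj : ∑ k, (starRingEnd ℂ) (uh k) * u k = (n : ℂ) := by
    have h1 : ∀ k ∈ Finset.univ,
        (starRingEnd ℂ) (uh k) * u k = ((‖u k‖ ^ 2 : ℝ) : ℂ) / ((n : ℝ) : ℂ) := by
      intro k _
      rw [huh, map_div₀, Complex.conj_ofReal, div_mul_eq_mul_div,
        ← Complex.normSq_eq_conj_mul_self]
      congr 1
      rw [Complex.normSq_eq_norm_sq]
    have h2 : ∑ k, ((‖u k‖ ^ 2 : ℝ) : ℂ) = (((n : ℝ) : ℂ)) ^ 2 := by
      exact_mod_cast hn2.symm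
    rw [Finset.sum_congr rfl h1, ← Finset.sum_div, h2, sq, mul_div_assoc, div_self hnC, mul_one]
  have hsig : ∀ j, ∑ k, B' j k * u k = ∑ k, B j k * u k := by
    intro j
    calc ∑ k, B' j k * u k
        = (∑ l, B j l * uh l) * ∑ k, (starRingEnd ℂ) (uh k) * u k := by
          rw [Finset.mul_sum]; exact Finset.sum_congr rfl fun k _ => by rw [hB']; ring
      _ = (∑ l, B j l * uh l) * (n : ℂ) := by rw [hconj]
      _ = ∑ k, B j k * u k := by
          rw [Finset.sum_mul]
          refine Finset.sum_congr rfl fun l _ => ?_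
          rw [huh]
          field_simp
  refine ⟨hsig, ?_, ?_⟩
  · apply Finset.sum_le_sum; intro j _
    have hrow : ∑ k, ‖B' j k‖ ^ 2 = ‖∑ l, B j l * uh l‖ ^ 2 := by
      have h1 : ∀ k ∈ Finset.univ,
          ‖B' j k‖ ^ 2 = ‖∑ l, B j l * uh l‖ ^ 2 * ‖uh k‖ ^ 2 := by
        intro k _; rw [hB', norm_mul, mul_pow, RCLike.norm_conj]
      rw [Finset.sum_congr rfl h1, ← Finset.mul_sum, hunit, mul_one]
    rw [hrow]
    calc ‖∑ l, B j l * uh l‖ ^ 2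
        ≤ (∑ l, ‖B j l‖ ^ 2) * (∑ l, ‖uh l‖ ^ 2) := cs_norm _ _
      _ = ∑ l, ‖B j l‖ ^ 2 := by rw [hunit, mul_one]
  · intro f
    have h1 : ∀ k, ∑ j, B' j k * f j
        = (starRingEnd ℂ) (uh k) * ∑ j, (∑ l, B j l * uh l) * f j := by
      intro k; rw [Finset.mul_sum]
      exact Finset.sum_congr rfl fun j _ => by rw [hB']; ring
    have h2 : ∑ k, ‖∑ j, B' j k * f j‖ ^ 2 = ‖∑ j, (∑ l, B j l * uh l) * f j‖ ^ 2 := by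
      have h2' : ∀ k ∈ Finset.univ, ‖∑ j, B' j k * f j‖ ^ 2
          = ‖uh k‖ ^ 2 * ‖∑ j, (∑ l, B j l * uh l) * f j‖ ^ 2 := by
        intro k _; rw [h1 k, norm_mul, mul_pow, RCLike.norm_conj]
      rw [Finset.sum_congr rfl h2', ← Finset.sum_mul, hunit, one_mul]
    have h3 : ∑ j, (∑ l, B j l * uh l) * f j = ∑ l, uh l * ∑ j, B j l * f j := by
      simp_rw [Finset.sum_mul, Finset.mul_sum]
      rw [Finset.sum_comm]
      exact Finset.sum_congr rfl fun l _ => Finset.sum_congr rfl fun j _ => by ring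
    rw [h2, h3]
    calc ‖∑ l, uh l * ∑ j, B j l * f j‖ ^ 2
        ≤ (∑ l, ‖uh l‖ ^ 2) * ∑ l, ‖∑ j, B j l * f j‖ ^ 2 := cs_norm _ _
      _ = _ := by rw [hunit, one_mul]

theorem stmt4 (R : ℕ) (hR : 1 ≤ R) (M : Fin R → ℕ)
    (u : (i : Fin R) → Fin (M i) → ℂ) (hu : ∀ i, u i ≠ 0)
    (σR2 σD2 : ℝ) (hσR : 0 < σR2) (hσD : 0 < σD2)
    (P : Fin R → ℝ) (hP : ∀ i, 0 < P i)
    (B : (i : Fin R) → Matrix (Fin (M i)) (Fin (M i)) ℂ)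
    (hB : FeasibleB R M σR2 P u B)
    -- `û_i := u_i / ‖u_i‖₂` and `B'_i := B_i û_i û_iᴴ`
    (uhat : (i : Fin R) → Fin (M i) → ℂ)
    (huhat : ∀ i k, uhat i k = u i k / (vnorm2 (u i) : ℂ))
    (B' : (i : Fin R) → Matrix (Fin (M i)) (Fin (M i)) ℂ)
    (hB' : ∀ i j k, B' i j k = (∑ l, B i j l * uhat i l) * (starRingEnd ℂ) (uhat i k)) :
    FeasibleB R M σR2 P u B' ∧
    ∀ f : (i : Fin R) → Fin (M i) → ℂ,
      SNRval R M σR2 σD2 u B f ≤ SNRval R M σR2 σD2 u B' f := by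
  have K := fun i => key (u i) (hu i) (uhat i) (huhat i) (B i) (B' i) (hB' i)
  constructor
  · intro i
    obtain ⟨hsig, hfrob, -⟩ := K i
    have h1 : (∑ j, ‖∑ k, B' i j k * u i k‖ ^ 2) = ∑ j, ‖∑ k, B i j k * u i k‖ ^ 2 :=
      Finset.sum_congr rfl fun j _ => by rw [hsig j]
    calc (∑ j, ‖∑ k, B' i j k * u i k‖ ^ 2) + σR2 * ∑ j, ∑ k, ‖B' i j k‖ ^ 2
        ≤ (∑ j, ‖∑ k, B i j k * u i k‖ ^ 2) + σR2 * ∑ j, ∑ k, ‖B i j k‖ ^ 2 := by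
          rw [h1]
          exact add_le_add_right (mul_le_mul_of_nonneg_left hfrob hσR.le) _
      _ ≤ P i := hB i
  · intro f
    have hnum : ∑ i, ∑ j, ∑ k, f i j * B' i j k * u i k
        = ∑ i, ∑ j, ∑ k, f i j * B i j k * u i k := by
      refine Finset.sum_congr rfl fun i _ => Finset.sum_congr rfl fun j _ => ?_
      obtain ⟨hsig, -, -⟩ := K i
      calc ∑ k, f i j * B' i j k * u i k = f i j * ∑ k, B' i j k * u i k := by
            rw [Finset.mul_sum]; exact Finset.sum_congr rfl fun k _ => by ring
        _ = f i j * ∑ k, B i j k * u i k := by rw [hsig j]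
        _ = ∑ k, f i j * B i j k * u i k := by
            rw [Finset.mul_sum]; exact Finset.sum_congr rfl fun k _ => by ring
    have hden : ∑ i, ∑ k, ‖∑ j, B' i j k * f i j‖ ^ 2
        ≤ ∑ i, ∑ k, ‖∑ j, B i j k * f i j‖ ^ 2 :=
      Finset.sum_le_sum fun i _ => (K i).2.2 (f i)
    have hden0 : (0:ℝ) ≤ ∑ i, ∑ k, ‖∑ j, B' i j k * f i j‖ ^ 2 :=
      Finset.sum_nonneg fun i _ => Finset.sum_nonneg fun k _ => sq_nonneg _
    unfold SNRval
    rw [hnum]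
    apply div_le_div_of_nonneg_left (by positivity) (by positivity)
    have : σR2 * ∑ i, ∑ k, ‖∑ j, B' i j k * f i j‖ ^ 2
        ≤ σR2 * ∑ i, ∑ k, ‖∑ j, B i j k * f i j‖ ^ 2 :=
      mul_le_mul_of_nonneg_left hden hσR.le
    linarith
end
end

section
/- Worst case over a box attained at a vertex: Let R ≥ 1, σ_D² > 0, σ_R² ≥ 0, and let c_i ≥ 0, κ_i ≥ 0, and 0 ≤ ℓ_i ≤ h_i for i = 1,…,R. Define g : ℝ^R → ℝ by g(x) = (∑_{i=1}^R κ_i c_i x_i)² / (σ_R² ∑_{i=1}^R c_i² x_i² + σ_D²). Then the minimum of g over the box X = ∏_{i=1}^R [ℓ_i, h_i] equals the minimum of g over the finite vertex set V = {x ∈ ℝ^R : x_i ∈ {ℓ_i, h_i} for all i}; i.e., min_{x∈X} g(x) = min_{x∈V} g(x). -/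
private lemma key_sqrt (A B lo hi lam mu : ℝ) (hA : 0 ≤ A) (hB : 0 ≤ B)
    (hlo : 0 ≤ lo) (hhi : 0 ≤ hi) (hlam : 0 ≤ lam) (hmu : 0 ≤ mu)
    (hsum : lam + mu = 1) :
    Real.sqrt (A * (lam * lo + mu * hi) ^ 2 + B) ≤
      lam * Real.sqrt (A * lo ^ 2 + B) + mu * Real.sqrt (A * hi ^ 2 + B) := by
  have h1 : 0 ≤ A * lo ^ 2 + B := by positivity
  have h2 : 0 ≤ A * hi ^ 2 + B := by positivity
  have hs1 := Real.sq_sqrt h1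
  have hs2 := Real.sq_sqrt h2
  have hcs : A * lo * hi + B ≤ Real.sqrt (A * lo ^ 2 + B) * Real.sqrt (A * hi ^ 2 + B) := by
    rw [← Real.sqrt_mul h1]
    have hsq : (A * lo * hi + B) ^ 2 ≤ (A * lo ^ 2 + B) * (A * hi ^ 2 + B) := by
      nlinarith [sq_nonneg (lo - hi), mul_nonneg hA hB]
    calc A * lo * hi + B = Real.sqrt ((A * lo * hi + B) ^ 2) := by
          rw [Real.sqrt_sq (by positivity)]
      _ ≤ Real.sqrt ((A * lo ^ 2 + B) * (A * hi ^ 2 + B)) := Real.sqrt_le_sqrt hsq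
  have hRHS : 0 ≤ lam * Real.sqrt (A * lo ^ 2 + B) + mu * Real.sqrt (A * hi ^ 2 + B) := by
    positivity
  have hY2 : A * (lam * lo + mu * hi) ^ 2 + B ≤
      (lam * Real.sqrt (A * lo ^ 2 + B) + mu * Real.sqrt (A * hi ^ 2 + B)) ^ 2 := by
    have hprod : 2 * lam * mu * (A * lo * hi + B) ≤
        2 * lam * mu * (Real.sqrt (A * lo ^ 2 + B) * Real.sqrt (A * hi ^ 2 + B)) :=
      mul_le_mul_of_nonneg_left hcs (by positivity)
    have e1 : lam ^ 2 * Real.sqrt (A * lo ^ 2 + B) ^ 2 = lam ^ 2 * (A * lo ^ 2 + B) := by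
      rw [hs1]
    have e2 : mu ^ 2 * Real.sqrt (A * hi ^ 2 + B) ^ 2 = mu ^ 2 * (A * hi ^ 2 + B) := by
      rw [hs2]
    have key : lam ^ 2 * (A * lo ^ 2 + B) + mu ^ 2 * (A * hi ^ 2 + B) +
        2 * lam * mu * (A * lo * hi + B) ≤
        (lam * Real.sqrt (A * lo ^ 2 + B) + mu * Real.sqrt (A * hi ^ 2 + B)) ^ 2 := by
      nlinarith [e1, e2, hprod]
    have hid : A * (lam * lo + mu * hi) ^ 2 + B =
        lam ^ 2 * (A * lo ^ 2 + B) + mu ^ 2 * (A * hi ^ 2 + B) +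
        2 * lam * mu * (A * lo * hi + B) := by
      have hmu' : mu = 1 - lam := by linarith
      rw [hmu']; ring
    linarith [key, hid.le]
  calc Real.sqrt (A * (lam * lo + mu * hi) ^ 2 + B)
      ≤ Real.sqrt ((lam * Real.sqrt (A * lo ^ 2 + B) + mu * Real.sqrt (A * hi ^ 2 + B)) ^ 2) :=
        Real.sqrt_le_sqrt hY2
    _ = _ := Real.sqrt_sq hRHS

private lemma scalar_min (a b al β lo hi t : ℝ) (ha : 0 ≤ a) (hb : 0 ≤ b)
    (hal : 0 ≤ al) (hβ : 0 < β) (hlo : 0 ≤ lo) (h1 : lo ≤ t) (h2 : t ≤ hi) :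
    min ((a + b * lo) ^ 2 / (al * lo ^ 2 + β)) ((a + b * hi) ^ 2 / (al * hi ^ 2 + β)) ≤
      (a + b * t) ^ 2 / (al * t ^ 2 + β) := by
  set γ := min ((a + b * lo) ^ 2 / (al * lo ^ 2 + β)) ((a + b * hi) ^ 2 / (al * hi ^ 2 + β)) with hγ
  have hγ0 : 0 ≤ γ := le_min (by positivity) (by positivity)
  rcases eq_or_lt_of_le (le_trans h1 h2) with heq | hlt
  · -- lo = hi, so t = lo
    have ht : t = lo := le_antisymm (heq ▸ h2) h1
    subst ht
    exact min_le_left _ _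
  · -- lo < hi
    have hhi : 0 ≤ hi := le_trans hlo (le_of_lt hlt)
    have hd : 0 < hi - lo := by linarith
    set lam := (hi - t) / (hi - lo) with hlam_def
    set mu := (t - lo) / (hi - lo) with hmu_def
    have hlam : 0 ≤ lam := div_nonneg (by linarith) (le_of_lt hd)
    have hmu : 0 ≤ mu := div_nonneg (by linarith) (le_of_lt hd)
    have hsum : lam + mu = 1 := by rw [hlam_def, hmu_def]; field_simp; ring
    have ht_eq : t = lam * lo + mu * hi := by rw [hlam_def, hmu_def]; field_simp; ring
    have hQlo : 0 < al * lo ^ 2 + β := by positivity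
    have hQhi : 0 < al * hi ^ 2 + β := by positivity
    have hQt : 0 < al * t ^ 2 + β := by positivity
    have hep_lo : Real.sqrt (γ * al * lo ^ 2 + γ * β) ≤ a + b * lo := by
      have h1' : γ * (al * lo ^ 2 + β) ≤ (a + b * lo) ^ 2 := by
        have := min_le_left ((a + b * lo) ^ 2 / (al * lo ^ 2 + β))
          ((a + b * hi) ^ 2 / (al * hi ^ 2 + β))
        rw [← hγ] at this
        calc γ * (al * lo ^ 2 + β) ≤ ((a + b * lo) ^ 2 / (al * lo ^ 2 + β)) * (al * lo ^ 2 + β) :=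
              mul_le_mul_of_nonneg_right this (le_of_lt hQlo)
          _ = (a + b * lo) ^ 2 := by field_simp
      calc Real.sqrt (γ * al * lo ^ 2 + γ * β) = Real.sqrt (γ * (al * lo ^ 2 + β)) := by ring_nf
        _ ≤ Real.sqrt ((a + b * lo) ^ 2) := Real.sqrt_le_sqrt h1'
        _ = a + b * lo := Real.sqrt_sq (by positivity)
    have hep_hi : Real.sqrt (γ * al * hi ^ 2 + γ * β) ≤ a + b * hi := by
      have h1' : γ * (al * hi ^ 2 + β) ≤ (a + b * hi) ^ 2 := by
        have := min_le_right ((a + b * lo) ^ 2 / (al * lo ^ 2 + β))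
          ((a + b * hi) ^ 2 / (al * hi ^ 2 + β))
        rw [← hγ] at this
        calc γ * (al * hi ^ 2 + β) ≤ ((a + b * hi) ^ 2 / (al * hi ^ 2 + β)) * (al * hi ^ 2 + β) :=
              mul_le_mul_of_nonneg_right this (le_of_lt hQhi)
          _ = (a + b * hi) ^ 2 := by field_simp
      calc Real.sqrt (γ * al * hi ^ 2 + γ * β) = Real.sqrt (γ * (al * hi ^ 2 + β)) := by ring_nf
        _ ≤ Real.sqrt ((a + b * hi) ^ 2) := Real.sqrt_le_sqrt h1'
        _ = a + b * hi := Real.sqrt_sq (by positivity)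
    have hmain : Real.sqrt (γ * al * t ^ 2 + γ * β) ≤ a + b * t := by
      calc Real.sqrt (γ * al * t ^ 2 + γ * β)
          = Real.sqrt ((γ * al) * (lam * lo + mu * hi) ^ 2 + γ * β) := by rw [← ht_eq]
        _ ≤ lam * Real.sqrt ((γ * al) * lo ^ 2 + γ * β) + mu * Real.sqrt ((γ * al) * hi ^ 2 + γ * β) :=
            key_sqrt _ _ _ _ _ _ (by positivity) (by positivity) hlo hhi hlam hmu hsum
        _ ≤ lam * (a + b * lo) + mu * (a + b * hi) :=
            add_le_add (mul_le_mul_of_nonneg_left hep_lo hlam)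
              (mul_le_mul_of_nonneg_left hep_hi hmu)
        _ = a + b * t := by rw [ht_eq]; nlinarith [hsum]
    have hfin : γ * (al * t ^ 2 + β) ≤ (a + b * t) ^ 2 := by
      have h0 : 0 ≤ γ * al * t ^ 2 + γ * β := by positivity
      have := Real.sq_sqrt h0
      nlinarith [hmain, Real.sqrt_nonneg (γ * al * t ^ 2 + γ * β)]
    rw [le_div_iff₀ hQt]
    exact hfin

theorem stmt8 (R : ℕ) (hR : 1 ≤ R) (σR2 σD2 : ℝ) (hσD : 0 < σD2) (hσR : 0 ≤ σR2)
    (c κ l h : Fin R → ℝ) (hc : ∀ i, 0 ≤ c i) (hκ : ∀ i, 0 ≤ κ i)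
    (hl : ∀ i, 0 ≤ l i) (hlh : ∀ i, l i ≤ h i) :
    sInf ((fun x : Fin R → ℝ =>
          (∑ i, κ i * c i * x i) ^ 2 / (σR2 * ∑ i, (c i) ^ 2 * (x i) ^ 2 + σD2)) ''
        Set.Icc l h) =
      sInf ((fun x : Fin R → ℝ =>
          (∑ i, κ i * c i * x i) ^ 2 / (σR2 * ∑ i, (c i) ^ 2 * (x i) ^ 2 + σD2)) ''
        {x : Fin R → ℝ | ∀ i, x i = l i ∨ x i = h i}) := by
  set g : (Fin R → ℝ) → ℝ := fun x =>
    (∑ i, κ i * c i * x i) ^ 2 / (σR2 * ∑ i, (c i) ^ 2 * (x i) ^ 2 + σD2) with hg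
  have hden : ∀ x : Fin R → ℝ, 0 < σR2 * ∑ i, (c i) ^ 2 * (x i) ^ 2 + σD2 := by
    intro x
    have : 0 ≤ ∑ i, (c i) ^ 2 * (x i) ^ 2 :=
      Finset.sum_nonneg fun i _ => by positivity
    nlinarith [mul_nonneg hσR this]
  have hg0 : ∀ x, 0 ≤ g x := fun x => div_nonneg (sq_nonneg _) (le_of_lt (hden x))
  -- coordinate improvement lemma
  have coord : ∀ x ∈ Set.Icc l h, ∀ j : Fin R,
      g (Function.update x j (l j)) ≤ g x ∨ g (Function.update x j (h j)) ≤ g x := by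
    intro x hx j
    set a := ∑ i ∈ Finset.univ.erase j, κ i * c i * x i with ha_def
    set b := κ j * c j with hb_def
    set al := σR2 * (c j) ^ 2 with hal_def
    set β := σR2 * (∑ i ∈ Finset.univ.erase j, (c i) ^ 2 * (x i) ^ 2) + σD2 with hβ_def
    have hxnn : ∀ i, 0 ≤ x i := fun i => le_trans (hl i) (hx.1 i)
    have ha : 0 ≤ a := Finset.sum_nonneg fun i _ => by
      have := hxnn i; have := hκ i; have := hc i; positivity
    have hb : 0 ≤ b := mul_nonneg (hκ j) (hc j)
    have hal : 0 ≤ al := by positivity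
    have hβ : 0 < β := by
      have : 0 ≤ ∑ i ∈ Finset.univ.erase j, (c i) ^ 2 * (x i) ^ 2 :=
        Finset.sum_nonneg fun i _ => by positivity
      nlinarith [mul_nonneg hσR this]
    have hnum : ∀ v : ℝ, ∑ i, κ i * c i * Function.update x j v i = a + b * v := by
      intro v
      rw [← Finset.add_sum_erase _ _ (Finset.mem_univ j)]
      rw [Function.update_self]
      have : ∑ i ∈ Finset.univ.erase j, κ i * c i * Function.update x j v i = a := by
        apply Finset.sum_congr rfl
        intro i hi
        rw [Function.update_of_ne (Finset.ne_of_mem_erase hi)]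
      rw [this]; ring
    have hden' : ∀ v : ℝ,
        σR2 * ∑ i, (c i) ^ 2 * (Function.update x j v i) ^ 2 + σD2 = al * v ^ 2 + β := by
      intro v
      rw [← Finset.add_sum_erase _ _ (Finset.mem_univ j)]
      rw [Function.update_self]
      have : ∑ i ∈ Finset.univ.erase j, (c i) ^ 2 * (Function.update x j v i) ^ 2 =
          ∑ i ∈ Finset.univ.erase j, (c i) ^ 2 * (x i) ^ 2 := by
        apply Finset.sum_congr rfl
        intro i hi
        rw [Function.update_of_ne (Finset.ne_of_mem_erase hi)]
      rw [this]; ring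
    have hgx : g x = (a + b * x j) ^ 2 / (al * (x j) ^ 2 + β) := by
      have := hnum (x j)
      have h2 := hden' (x j)
      rw [Function.update_eq_self] at this h2
      rw [hg]; dsimp only; rw [this, h2]
    have hgl : g (Function.update x j (l j)) = (a + b * l j) ^ 2 / (al * (l j) ^ 2 + β) := by
      rw [hg]; dsimp only; rw [hnum (l j), hden' (l j)]
    have hgh : g (Function.update x j (h j)) = (a + b * h j) ^ 2 / (al * (h j) ^ 2 + β) := by
      rw [hg]; dsimp only; rw [hnum (h j), hden' (h j)]
    have := scalar_min a b al β (l j) (h j) (x j) ha hb hal hβ (hl j) (hx.1 j) (hx.2 j)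
    rw [hgx, hgl, hgh]
    rcases min_le_iff.mp this with h' | h'
    · exact Or.inl h'
    · exact Or.inr h'
  -- induction: every box point dominated by a vertex
  have main : ∀ s : Finset (Fin R), ∀ x ∈ Set.Icc l h,
      (∀ i, i ∉ s → x i = l i ∨ x i = h i) →
      ∃ v, (∀ i, v i = l i ∨ v i = h i) ∧ g v ≤ g x := by
    intro s
    induction s using Finset.induction_on with
    | empty =>
      intro x _ hfree
      exact ⟨x, fun i => hfree i (Finset.notMem_empty i), le_refl _⟩
    | @insert j s hj ih =>
      intro x hx hfree
      have hupd_mem : ∀ v, l j ≤ v → v ≤ h j → Function.update x j v ∈ Set.Icc l h := by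
        intro v hv1 hv2
        constructor <;> intro i <;> by_cases hij : i = j
        · subst hij; simp [hv1]
        · simp [Function.update_of_ne hij]; exact hx.1 i
        · subst hij; simp [hv2]
        · simp [Function.update_of_ne hij]; exact hx.2 i
      have hupd_free : ∀ v, (v = l j ∨ v = h j) →
          ∀ i, i ∉ s → Function.update x j v i = l i ∨ Function.update x j v i = h i := by
        intro v hv i hi
        by_cases hij : i = j
        · subst hij; rw [Function.update_self]; exact hv
        · rw [Function.update_of_ne hij]
          exact hfree i (by simp [hij, hi])
      rcases coord x hx j with hcase | hcase
      · obtain ⟨v, hv, hle⟩ := ih (Function.update x j (l j))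
          (hupd_mem _ (le_refl _) (hlh j)) (hupd_free _ (Or.inl rfl))
        exact ⟨v, hv, le_trans hle hcase⟩
      · obtain ⟨v, hv, hle⟩ := ih (Function.update x j (h j))
          (hupd_mem _ (hlh j) (le_refl _)) (hupd_free _ (Or.inr rfl))
        exact ⟨v, hv, le_trans hle hcase⟩
  have hsub : {x : Fin R → ℝ | ∀ i, x i = l i ∨ x i = h i} ⊆ Set.Icc l h := by
    intro x hx
    constructor <;> intro i <;> rcases hx i with h' | h' <;> rw [h'] <;>
      first | exact le_refl _ | exact hlh i
  have hVne : ({x : Fin R → ℝ | ∀ i, x i = l i ∨ x i = h i}).Nonempty :=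
    ⟨l, fun i => Or.inl rfl⟩
  have hSne : (Set.Icc l h).Nonempty := ⟨l, le_refl _, hlh⟩
  have hbddS : BddBelow (g '' Set.Icc l h) := by
    refine ⟨0, ?_⟩; rintro y ⟨x, -, rfl⟩; exact hg0 x
  have hbddV : BddBelow (g '' {x : Fin R → ℝ | ∀ i, x i = l i ∨ x i = h i}) := by
    refine ⟨0, ?_⟩; rintro y ⟨x, -, rfl⟩; exact hg0 x
  apply le_antisymm
  · exact csInf_le_csInf hbddS (hVne.image g) (Set.image_mono hsub)
  · apply le_csInf (hSne.image g)
    rintro y ⟨x, hx, rfl⟩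
    obtain ⟨v, hv, hle⟩ := main Finset.univ x hx (fun i hi => absurd (Finset.mem_univ i) hi)
    exact le_trans (csInf_le hbddV ⟨v, hv, rfl⟩) hle
end

section
/- At least one relay transmits at full power at the optimum (Remark 1): Assume u_i ≠ 0, f̃_i ≠ 0, and 0 ≤ ε_i < ‖f̃_i‖₂ for all i (so every a ∈ B has strictly positive entries). Suppose c^♯ ∈ ℝ^R with 0 ≤ c_i^♯ ≤ √(P_i/(σ_R²+‖u_i‖₂²)) for all i attains the maximum of min_{a∈B} S(c,a) over this box, and suppose the optimal value min_{a∈B} S(c^♯,a) is strictly positive. Then there exists an index i with c_i^♯ = √(P_i/(σ_R²+‖u_i‖₂²)). -/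
noncomputable section

/-- The vertex set `𝓑 = {a : a_i = ‖f̃_i‖ ± ε_i}`. -/
def VertexB (R : ℕ) (φ ε : Fin R → ℝ) : Set (Fin R → ℝ) :=
  {a | ∀ i, a i = φ i + ε i ∨ a i = φ i - ε i}

/-- The reduced SNR expression `S(c,a)` with effective gains `κ_i`. -/
def Sval (R : ℕ) (σR2 σD2 : ℝ) (κ c a : Fin R → ℝ) : ℝ :=
  (∑ i, a i * c i * κ i) ^ 2 / (σR2 * ∑ i, (a i) ^ 2 * (c i) ^ 2 + σD2)

theorem stmt9 (R : ℕ) (hR : 1 ≤ R) (M : Fin R → ℕ)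
    (u ftil : (i : Fin R) → Fin (M i) → ℂ) (ε : Fin R → ℝ)
    (σR2 σD2 : ℝ) (hσR : 0 < σR2) (hσD : 0 < σD2)
    (P : Fin R → ℝ) (hP : ∀ i, 0 < P i)
    (hu : ∀ i, u i ≠ 0) (hf : ∀ i, ftil i ≠ 0)
    (hε : ∀ i, 0 ≤ ε i ∧ ε i < vnorm2 (ftil i))
    (c : Fin R → ℝ)
    (hcbox : ∀ i, 0 ≤ c i ∧ c i ≤ Real.sqrt (P i / (σR2 + (vnorm2 (u i)) ^ 2)))
    (hopt : ∀ c' : Fin R → ℝ,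
      (∀ i, 0 ≤ c' i ∧ c' i ≤ Real.sqrt (P i / (σR2 + (vnorm2 (u i)) ^ 2))) →
      sInf {t : ℝ | ∃ a ∈ VertexB R (fun i => vnorm2 (ftil i)) ε,
          t = Sval R σR2 σD2 (fun i => vnorm2 (u i)) c' a} ≤
        sInf {t : ℝ | ∃ a ∈ VertexB R (fun i => vnorm2 (ftil i)) ε,
          t = Sval R σR2 σD2 (fun i => vnorm2 (u i)) c a})
    (hpos : 0 < sInf {t : ℝ | ∃ a ∈ VertexB R (fun i => vnorm2 (ftil i)) ε,
          t = Sval R σR2 σD2 (fun i => vnorm2 (u i)) c a}) :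
    ∃ i, c i = Real.sqrt (P i / (σR2 + (vnorm2 (u i)) ^ 2)) := by
  by_contra hcon
  push_neg at hcon
  have hFin : Nonempty (Fin R) := ⟨⟨0, hR⟩⟩
  set κ : Fin R → ℝ := fun i => vnorm2 (u i) with hκ
  set ub : Fin R → ℝ := fun i => Real.sqrt (P i / (σR2 + κ i ^ 2)) with hubdef
  set B := VertexB R (fun i => vnorm2 (ftil i)) ε with hBdef
  have hubpos : ∀ i, 0 < ub i := by
    intro i
    apply Real.sqrt_pos.2
    apply div_pos (hP i)
    positivity
  have hlt : ∀ i, c i < ub i := fun i => lt_of_le_of_ne (hcbox i).2 (hcon i)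
  -- B is finite and nonempty
  have hBfin : B.Finite := by
    apply Set.Finite.subset
      (Set.Finite.pi (t := fun i => ({vnorm2 (ftil i) + ε i, vnorm2 (ftil i) - ε i} : Set ℝ))
        (fun i => (Set.finite_singleton _).insert _))
    intro a ha i _
    rcases ha i with h | h
    · exact Or.inl h
    · exact Or.inr h
  have hBne : B.Nonempty := ⟨fun i => vnorm2 (ftil i) + ε i, fun i => Or.inl rfl⟩
  have himg : ∀ c' : Fin R → ℝ,
      {t : ℝ | ∃ a ∈ B, t = Sval R σR2 σD2 κ c' a} = (fun a => Sval R σR2 σD2 κ c' a) '' B := by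
    intro c'
    ext t
    simp only [Set.mem_image, Set.mem_setOf_eq, eq_comm]
  have hTfin : ∀ c', ({t : ℝ | ∃ a ∈ B, t = Sval R σR2 σD2 κ c' a}).Finite := by
    intro c'; rw [himg]; exact hBfin.image _
  have hTne : ∀ c', ({t : ℝ | ∃ a ∈ B, t = Sval R σR2 σD2 κ c' a}).Nonempty := by
    intro c'; rw [himg]; exact hBne.image _
  -- each S(c,a) is at least the inf, hence positive
  have hge : ∀ a ∈ B, sInf {t : ℝ | ∃ a ∈ B, t = Sval R σR2 σD2 κ c a}
      ≤ Sval R σR2 σD2 κ c a := by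
    intro a ha
    exact csInf_le (hTfin c).bddBelow ⟨a, ha, rfl⟩
  have hSpos : ∀ a ∈ B, 0 < Sval R σR2 σD2 κ c a := fun a ha => lt_of_lt_of_le hpos (hge a ha)
  -- the scaling factor t
  set r : Fin R → ℝ := fun i => if c i = 0 then 2 else ub i / c i with hrdef
  have hr1 : ∀ i, 1 < r i := by
    intro i
    by_cases h : c i = 0
    · simp [hrdef, h]
    · have hcpos : 0 < c i := lt_of_le_of_ne (hcbox i).1 (Ne.symm h)
      simpa [hrdef, h] using (one_lt_div hcpos).2 (hlt i)
  set t : ℝ := Finset.univ.inf' Finset.univ_nonempty r with htdef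
  have ht1 : 1 < t := by
    rw [htdef, Finset.lt_inf'_iff]
    exact fun i _ => hr1 i
  have ht0 : 0 < t := lt_trans one_pos ht1
  have htle : ∀ i, t * c i ≤ ub i := by
    intro i
    by_cases h : c i = 0
    · simp [h]; exact le_of_lt (hubpos i)
    · have hcpos : 0 < c i := lt_of_le_of_ne (hcbox i).1 (Ne.symm h)
      have : t ≤ r i := Finset.inf'_le r (Finset.mem_univ i)
      rw [hrdef] at this
      simp only [h, if_false] at this
      calc t * c i ≤ (ub i / c i) * c i := by nlinarith
        _ = ub i := by field_simp
  set c2 : Fin R → ℝ := fun i => t * c i with hc2def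
  have hc2box : ∀ i, 0 ≤ c2 i ∧ c2 i ≤ ub i := by
    intro i
    exact ⟨mul_nonneg (le_of_lt ht0) (hcbox i).1, htle i⟩
  -- strict improvement at every vertex
  have hstrict : ∀ a ∈ B, Sval R σR2 σD2 κ c a < Sval R σR2 σD2 κ c2 a := by
    intro a ha
    set N := ∑ i, a i * c i * κ i with hNdef
    set D := ∑ i, (a i) ^ 2 * (c i) ^ 2 with hDdef
    have hN2 : 0 < N ^ 2 := by
      by_contra h
      push_neg at h
      have hz : N ^ 2 = 0 := le_antisymm h (sq_nonneg _)
      have hS := hSpos a ha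
      rw [Sval, ← hNdef, hz] at hS
      simp at hS
    have hD : 0 ≤ D := by rw [hDdef]; positivity
    have hsum1 : ∑ i, a i * c2 i * κ i = t * N := by
      rw [hc2def, Finset.mul_sum]
      apply Finset.sum_congr rfl
      intro i _; ring
    have hsum2 : ∑ i, (a i) ^ 2 * (c2 i) ^ 2 = t ^ 2 * D := by
      rw [hc2def, hDdef, Finset.mul_sum]
      apply Finset.sum_congr rfl
      intro i _; ring
    rw [Sval, Sval, hsum1, hsum2, ← hNdef, ← hDdef]
    have hden1 : 0 < σR2 * D + σD2 := by positivity
    have hden2 : 0 < σR2 * (t ^ 2 * D) + σD2 := by positivity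
    rw [div_lt_div_iff₀ hden1 hden2]
    nlinarith [mul_pos (mul_pos hN2 hσD) (by nlinarith : (0:ℝ) < t ^ 2 - 1)]
  -- contradiction with optimality
  have hopt2 := hopt c2 hc2box
  obtain ⟨a, ha, haeq⟩ := (hTne c2).csInf_mem (hTfin c2)
  have h1 : sInf {t : ℝ | ∃ a ∈ B, t = Sval R σR2 σD2 κ c a} ≤ Sval R σR2 σD2 κ c a := hge a ha
  have h2 : Sval R σR2 σD2 κ c a < Sval R σR2 σD2 κ c2 a := hstrict a ha
  linarith [hopt2, haeq ▸ h2]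
end
end

section
/- Power-preserving reallocation inequality (key step of Appendix C): Let R ≥ 1, σ_R² > 0, σ_D² > 0. For i = 1,…,R let w'_i ≥ w''_i ≥ 0 and c''_i ≥ 0, and define c̃'_i := c''_i √((w''_i + σ_R²)/(w'_i + σ_R²)). Then for every f ∈ ℝ^R with f_i ≥ 0 for all i: (∑_{i=1}^R f_i c̃'_i √(w'_i))² / (σ_R² ∑_{i=1}^R f_i² (c̃'_i)² + σ_D²) ≥ (∑_{i=1}^R f_i c''_i √(w''_i))² / (σ_R² ∑_{i=1}^R f_i² (c''_i)² + σ_D²). -/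
theorem stmt11 (R : ℕ) (hR : 1 ≤ R) (σR2 σD2 : ℝ) (hσR : 0 < σR2) (hσD : 0 < σD2)
    (w' w'' c'' : Fin R → ℝ)
    (hw : ∀ i, w'' i ≤ w' i) (hw'' : ∀ i, 0 ≤ w'' i) (hc'' : ∀ i, 0 ≤ c'' i)
    (c' : Fin R → ℝ)
    (hc' : ∀ i, c' i = c'' i * Real.sqrt ((w'' i + σR2) / (w' i + σR2)))
    (f : Fin R → ℝ) (hf : ∀ i, 0 ≤ f i) :
    (∑ i, f i * c' i * Real.sqrt (w' i)) ^ 2 /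
        (σR2 * ∑ i, (f i) ^ 2 * (c' i) ^ 2 + σD2) ≥
      (∑ i, f i * c'' i * Real.sqrt (w'' i)) ^ 2 /
        (σR2 * ∑ i, (f i) ^ 2 * (c'' i) ^ 2 + σD2) := by
  have hb : ∀ i, (0:ℝ) < w' i + σR2 := fun i => by
    have := hw'' i; have := hw i; linarith
  have ha : ∀ i, (0:ℝ) < w'' i + σR2 := fun i => by
    have := hw'' i; linarith
  have hc'nn : ∀ i, 0 ≤ c' i := fun i => by
    rw [hc' i]; have := hc'' i
    have h1 := (ha i).le; have h2 := (hb i).le; positivity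
  have hc'le : ∀ i, c' i ≤ c'' i := by
    intro i
    rw [hc' i]
    have h1 : (w'' i + σR2) / (w' i + σR2) ≤ 1 :=
      (div_le_one (hb i)).2 (by linarith [hw i])
    calc c'' i * Real.sqrt ((w'' i + σR2) / (w' i + σR2))
        ≤ c'' i * 1 := by
          exact mul_le_mul_of_nonneg_left (Real.sqrt_le_one.2 h1) (hc'' i)
      _ = c'' i := mul_one _
  have hkey : ∀ i, c'' i * Real.sqrt (w'' i) ≤ c' i * Real.sqrt (w' i) := by
    intro i
    rw [hc' i, mul_assoc]
    have hs : Real.sqrt ((w'' i + σR2) / (w' i + σR2)) * Real.sqrt (w' i)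
        = Real.sqrt ((w'' i + σR2) / (w' i + σR2) * w' i) := by
      rw [Real.sqrt_mul (by have h1 := (ha i).le; have h2 := (hb i); positivity)]
    rw [hs]
    refine mul_le_mul_of_nonneg_left ?_ (hc'' i)
    apply Real.sqrt_le_sqrt
    rw [div_mul_eq_mul_div, le_div_iff₀ (hb i)]
    have := hw i
    nlinarith [hw'' i, hσR.le]
  have hN : (∑ i, f i * c'' i * Real.sqrt (w'' i)) ^ 2
      ≤ (∑ i, f i * c' i * Real.sqrt (w' i)) ^ 2 := by
    apply pow_le_pow_left₀
    · exact Finset.sum_nonneg fun i _ => by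
        have := hf i; have := hc'' i; have := Real.sqrt_nonneg (w'' i); positivity
    · apply Finset.sum_le_sum
      intro i _
      rw [mul_assoc, mul_assoc]
      exact mul_le_mul_of_nonneg_left (hkey i) (hf i)
  have hD : σR2 * ∑ i, (f i) ^ 2 * (c' i) ^ 2 + σD2
      ≤ σR2 * ∑ i, (f i) ^ 2 * (c'' i) ^ 2 + σD2 := by
    apply add_le_add_left
    apply mul_le_mul_of_nonneg_left _ hσR.le
    apply Finset.sum_le_sum
    intro i _
    exact mul_le_mul_of_nonneg_left (pow_le_pow_left₀ (hc'nn i) (hc'le i) 2) (by positivity)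
  have hD' : 0 < σR2 * ∑ i, (f i) ^ 2 * (c' i) ^ 2 + σD2 := by
    have : 0 ≤ ∑ i, (f i) ^ 2 * (c' i) ^ 2 :=
      Finset.sum_nonneg fun i _ => by positivity
    nlinarith
  exact div_le_div₀ (by positivity) hN hD' hD
end

section
/- Monotonicity of the worst-case SNR in the effective channel gains (core of Proposition 1): Assume f̃_i ≠ 0 and 0 ≤ ε_i ≤ ‖f̃_i‖₂ for all i. Define SNR : ℝ_{≥0}^R → ℝ by SNR(w) := sup over c ∈ ℝ^R with 0 ≤ c_i ≤ √(P_i/(σ_R² + w_i)) for all i, of min_{a∈B} (∑_{i=1}^R a_i c_i √(w_i))² / (σ_R² ∑_{i=1}^R a_i² c_i² + σ_D²). Then SNR is monotone nondecreasing: if w', w'' ∈ ℝ_{≥0}^R satisfy w'_i ≥ w''_i for all i, then SNR(w') ≥ SNR(w''). -/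
noncomputable section

/-- The worst-case SNR as a function of the effective channel gains `w`,
optimized over the power allocation factor `c`. -/
def SNRw (R : ℕ) (σR2 σD2 : ℝ) (P φ ε : Fin R → ℝ) (w : Fin R → ℝ) : ℝ :=
  sSup {s : ℝ | ∃ c : Fin R → ℝ,
    (∀ i, 0 ≤ c i ∧ c i ≤ Real.sqrt (P i / (σR2 + w i))) ∧
    s = sInf {t : ℝ | ∃ a ∈ VertexB R φ ε,
      t = (∑ i, a i * c i * Real.sqrt (w i)) ^ 2 /
            (σR2 * ∑ i, (a i) ^ 2 * (c i) ^ 2 + σD2)}}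

theorem stmt12 (R : ℕ) (hR : 1 ≤ R) (M : Fin R → ℕ)
    (ftil : (i : Fin R) → Fin (M i) → ℂ) (ε : Fin R → ℝ)
    (σR2 σD2 : ℝ) (hσR : 0 < σR2) (hσD : 0 < σD2)
    (P : Fin R → ℝ) (hP : ∀ i, 0 < P i)
    (hf : ∀ i, ftil i ≠ 0) (hε : ∀ i, 0 ≤ ε i ∧ ε i ≤ vnorm2 (ftil i))
    (w' w'' : Fin R → ℝ) (hw'' : ∀ i, 0 ≤ w'' i) (hw : ∀ i, w'' i ≤ w' i) :
    SNRw R σR2 σD2 P (fun i => vnorm2 (ftil i)) ε w'' ≤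
      SNRw R σR2 σD2 P (fun i => vnorm2 (ftil i)) ε w' := by
  have hw' : ∀ i, 0 ≤ w' i := fun i => le_trans (hw'' i) (hw i)
  set φ : Fin R → ℝ := fun i => vnorm2 (ftil i) with hφdef
  have hφ0 : ∀ i, 0 ≤ φ i := fun i => Real.sqrt_nonneg _
  have haB : ∀ a ∈ VertexB R φ ε, ∀ i, 0 ≤ a i := by
    intro a ha i
    have h1 := (hε i).1; have h2 := (hε i).2
    have h0 := hφ0 i
    rcases ha i with h | h <;> rw [h]
    · linarith
    · simp only [hφdef] at *; linarith
  have ha0B : (fun i => φ i + ε i) ∈ VertexB R φ ε := fun i => Or.inl rfl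
  -- generic facts about the inner sets
  have hden_pos : ∀ (c : Fin R → ℝ) (a : Fin R → ℝ),
      0 < σR2 * ∑ i, (a i) ^ 2 * (c i) ^ 2 + σD2 := by
    intro c a
    have hs : 0 ≤ ∑ i, (a i) ^ 2 * (c i) ^ 2 :=
      Finset.sum_nonneg fun i _ => by positivity
    nlinarith
  have hTlb : ∀ (w c : Fin R → ℝ),
      (0 : ℝ) ∈ lowerBounds {t : ℝ | ∃ a ∈ VertexB R φ ε,
        t = (∑ i, a i * c i * Real.sqrt (w i)) ^ 2 /
              (σR2 * ∑ i, (a i) ^ 2 * (c i) ^ 2 + σD2)} := by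
    rintro w c t ⟨a, ha, rfl⟩
    exact div_nonneg (sq_nonneg _) (hden_pos c a).le
  have hTne : ∀ (w c : Fin R → ℝ),
      Set.Nonempty {t : ℝ | ∃ a ∈ VertexB R φ ε,
        t = (∑ i, a i * c i * Real.sqrt (w i)) ^ 2 /
              (σR2 * ∑ i, (a i) ^ 2 * (c i) ^ 2 + σD2)} := by
    intro w c
    exact ⟨_, ⟨_, ha0B, rfl⟩⟩
  -- squared feasibility bound
  have hsq : ∀ (w c : Fin R → ℝ), (∀ i, 0 ≤ w i) →
      (∀ i, 0 ≤ c i ∧ c i ≤ Real.sqrt (P i / (σR2 + w i))) →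
      ∀ i, (c i) ^ 2 * (σR2 + w i) ≤ P i := by
    intro w c hw0 hc i
    have hpos : 0 < σR2 + w i := by linarith [hw0 i]
    have h1 : (c i) ^ 2 ≤ P i / (σR2 + w i) := by
      calc (c i) ^ 2 ≤ (Real.sqrt (P i / (σR2 + w i))) ^ 2 :=
            pow_le_pow_left₀ (hc i).1 (hc i).2 2
        _ = P i / (σR2 + w i) := Real.sq_sqrt (div_nonneg (hP i).le hpos.le)
    exact (le_div_iff₀ hpos).mp h1
  -- c i * sqrt (w i) ≤ sqrt (P i)
  have hcw : ∀ (w c : Fin R → ℝ), (∀ i, 0 ≤ w i) →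
      (∀ i, 0 ≤ c i ∧ c i ≤ Real.sqrt (P i / (σR2 + w i))) →
      ∀ i, c i * Real.sqrt (w i) ≤ Real.sqrt (P i) := by
    intro w c hw0 hc i
    have h1 := hsq w c hw0 hc i
    have h2 : (c i * Real.sqrt (w i)) ^ 2 ≤ P i := by
      rw [mul_pow, Real.sq_sqrt (hw0 i)]
      nlinarith [sq_nonneg (c i), hw0 i]
    have h3 : 0 ≤ c i * Real.sqrt (w i) := mul_nonneg (hc i).1 (Real.sqrt_nonneg _)
    exact (Real.le_sqrt h3 (hP i).le).mpr h2
  -- bound above for the w' set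
  have hbddS' : BddAbove {s : ℝ | ∃ c : Fin R → ℝ,
      (∀ i, 0 ≤ c i ∧ c i ≤ Real.sqrt (P i / (σR2 + w' i))) ∧
      s = sInf {t : ℝ | ∃ a ∈ VertexB R φ ε,
        t = (∑ i, a i * c i * Real.sqrt (w' i)) ^ 2 /
              (σR2 * ∑ i, (a i) ^ 2 * (c i) ^ 2 + σD2)}} := by
    refine ⟨(∑ i, (φ i + ε i) * Real.sqrt (P i)) ^ 2 / σD2, ?_⟩
    rintro s ⟨c, hc, rfl⟩
    have h1 : sInf {t : ℝ | ∃ a ∈ VertexB R φ ε,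
        t = (∑ i, a i * c i * Real.sqrt (w' i)) ^ 2 /
              (σR2 * ∑ i, (a i) ^ 2 * (c i) ^ 2 + σD2)} ≤
        (∑ i, (fun i => φ i + ε i) i * c i * Real.sqrt (w' i)) ^ 2 /
          (σR2 * ∑ i, ((fun i => φ i + ε i) i) ^ 2 * (c i) ^ 2 + σD2) :=
      csInf_le ⟨0, hTlb w' c⟩ ⟨_, ha0B, rfl⟩
    refine h1.trans ?_
    have ha0 : ∀ i, 0 ≤ φ i + ε i := fun i => haB _ ha0B i
    have hnum : ∑ i, (fun i => φ i + ε i) i * c i * Real.sqrt (w' i) ≤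
        ∑ i, (φ i + ε i) * Real.sqrt (P i) := by
      refine Finset.sum_le_sum fun i _ => ?_
      simp only
      rw [mul_assoc]
      exact mul_le_mul_of_nonneg_left (hcw w' c hw' hc i) (ha0 i)
    have hnum0 : 0 ≤ ∑ i, (fun i => φ i + ε i) i * c i * Real.sqrt (w' i) :=
      Finset.sum_nonneg fun i _ => by
        have := (hc i).1; have := ha0 i; positivity
    have hden : σD2 ≤ σR2 * ∑ i, ((fun i => φ i + ε i) i) ^ 2 * (c i) ^ 2 + σD2 := by
      have hs : 0 ≤ ∑ i, ((fun i => φ i + ε i) i) ^ 2 * (c i) ^ 2 :=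
        Finset.sum_nonneg fun i _ => by positivity
      nlinarith
    exact div_le_div₀ (sq_nonneg _) (pow_le_pow_left₀ hnum0 hnum 2) hσD hden
  -- main comparison
  unfold SNRw
  apply csSup_le
  · exact ⟨_, ⟨fun _ => 0, fun i => ⟨le_rfl, Real.sqrt_nonneg _⟩, rfl⟩⟩
  rintro s ⟨c'', hc'', rfl⟩
  -- construct matching c' feasible for w'
  set c' : Fin R → ℝ := fun i =>
    if w' i = 0 then 0 else c'' i * Real.sqrt (w'' i) / Real.sqrt (w' i) with hc'def
  have hc''0 : ∀ i, 0 ≤ c'' i := fun i => (hc'' i).1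
  have hc'0 : ∀ i, 0 ≤ c' i := by
    intro i
    by_cases h : w' i = 0
    · simp [hc'def, h]
    · simp only [hc'def, if_neg h]
      have := hc''0 i
      positivity
  have hc'le : ∀ i, c' i ≤ c'' i := by
    intro i
    by_cases h : w' i = 0
    · simp only [hc'def, if_pos h]; exact hc''0 i
    · have hw'pos : 0 < w' i := lt_of_le_of_ne (hw' i) (Ne.symm h)
      simp only [hc'def, if_neg h]
      rw [div_le_iff₀ (Real.sqrt_pos.mpr hw'pos)]
      exact mul_le_mul_of_nonneg_left (Real.sqrt_le_sqrt (hw i)) (hc''0 i)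
  have hkey : ∀ i, c' i * Real.sqrt (w' i) = c'' i * Real.sqrt (w'' i) := by
    intro i
    by_cases h : w' i = 0
    · have h2 : w'' i = 0 := le_antisymm (h ▸ hw i) (hw'' i)
      simp [hc'def, h, h2]
    · have hw'pos : 0 < w' i := lt_of_le_of_ne (hw' i) (Ne.symm h)
      have hs : Real.sqrt (w' i) ≠ 0 := ne_of_gt (Real.sqrt_pos.mpr hw'pos)
      simp only [hc'def, if_neg h]
      field_simp
  have hc'feas : ∀ i, 0 ≤ c' i ∧ c' i ≤ Real.sqrt (P i / (σR2 + w' i)) := by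
    intro i
    refine ⟨hc'0 i, ?_⟩
    by_cases h : w' i = 0
    · simp only [hc'def, if_pos h]; exact Real.sqrt_nonneg _
    · have hw'pos : 0 < w' i := lt_of_le_of_ne (hw' i) (Ne.symm h)
      have hpos : 0 < σR2 + w' i := by linarith
      refine (Real.le_sqrt (hc'0 i) (div_nonneg (hP i).le hpos.le)).mpr ?_
      have hA : (c'' i) ^ 2 * (σR2 + w'' i) ≤ P i := hsq w'' c'' hw'' hc'' i
      have hc'sq : (c' i) ^ 2 = (c'' i) ^ 2 * w'' i / w' i := by
        simp only [hc'def, if_neg h]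
        rw [div_pow, mul_pow, Real.sq_sqrt (hw'' i), Real.sq_sqrt (hw' i)]
      rw [hc'sq, div_le_div_iff₀ hw'pos hpos]
      nlinarith [mul_le_mul_of_nonneg_right hA (hw' i),
        mul_nonneg (mul_nonneg (sq_nonneg (c'' i)) hσR.le) (sub_nonneg.mpr (hw i)),
        mul_nonneg (mul_nonneg (sq_nonneg (c'' i)) (hw'' i)) (sub_nonneg.mpr (hw i))]
  -- compare the inner infima
  have hinf : sInf {t : ℝ | ∃ a ∈ VertexB R φ ε,
      t = (∑ i, a i * c'' i * Real.sqrt (w'' i)) ^ 2 /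
            (σR2 * ∑ i, (a i) ^ 2 * (c'' i) ^ 2 + σD2)} ≤
      sInf {t : ℝ | ∃ a ∈ VertexB R φ ε,
      t = (∑ i, a i * c' i * Real.sqrt (w' i)) ^ 2 /
            (σR2 * ∑ i, (a i) ^ 2 * (c' i) ^ 2 + σD2)} := by
    refine le_csInf (hTne w' c') ?_
    rintro t ⟨a, ha, rfl⟩
    have h1 : sInf {t : ℝ | ∃ a ∈ VertexB R φ ε,
        t = (∑ i, a i * c'' i * Real.sqrt (w'' i)) ^ 2 /
              (σR2 * ∑ i, (a i) ^ 2 * (c'' i) ^ 2 + σD2)} ≤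
        (∑ i, a i * c'' i * Real.sqrt (w'' i)) ^ 2 /
          (σR2 * ∑ i, (a i) ^ 2 * (c'' i) ^ 2 + σD2) :=
      csInf_le ⟨0, hTlb w'' c''⟩ ⟨a, ha, rfl⟩
    refine h1.trans ?_
    have hnum : ∑ i, a i * c' i * Real.sqrt (w' i) = ∑ i, a i * c'' i * Real.sqrt (w'' i) :=
      Finset.sum_congr rfl fun i _ => by rw [mul_assoc, hkey i, mul_assoc]
    have hden : σR2 * ∑ i, (a i) ^ 2 * (c' i) ^ 2 + σD2 ≤
        σR2 * ∑ i, (a i) ^ 2 * (c'' i) ^ 2 + σD2 := by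
      have hs : ∑ i, (a i) ^ 2 * (c' i) ^ 2 ≤ ∑ i, (a i) ^ 2 * (c'' i) ^ 2 :=
        Finset.sum_le_sum fun i _ =>
          mul_le_mul_of_nonneg_left (pow_le_pow_left₀ (hc'0 i) (hc'le i) 2) (sq_nonneg _)
      nlinarith
    rw [hnum]
    exact div_le_div_of_nonneg_left (sq_nonneg _) (hden_pos c' a) hden
  refine hinf.trans (le_csSup hbddS' ⟨c', hc'feas, rfl⟩)
end
end

section
/- Pareto-optimal points use full source power (Lemma 4): Let P_s > 0 and U := {w ∈ ℝ^R : there exists a Hermitian positive semidefinite matrix G ∈ ℂ^{N_T×N_T} with tr(G) ≤ P_s and w_i = tr(H_iᴴ H_i G) for all i}. Suppose w ∈ U, w ≠ 0, and w is Pareto optimal in U, meaning there is no w' ∈ U with w'_i ≥ w_i for all i and w' ≠ w. Then every Hermitian positive semidefinite G ∈ ℂ^{N_T×N_T} with tr(G) ≤ P_s and tr(H_iᴴ H_i G) = w_i for all i satisfies tr(G) = P_s. -/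
open Matrix
open scoped ComplexOrder

noncomputable section

-- Frobenius: re of trace of Aᴴ*A is sum of normSq
lemma trace_re_ctm {m n : ℕ} (A : Matrix (Fin m) (Fin n) ℂ) :
    (Aᴴ * A).trace.re = ∑ j, ∑ i, Complex.normSq (A i j) := by
  simp only [Matrix.trace, Matrix.diag, Matrix.mul_apply, Matrix.conjTranspose_apply]
  rw [Complex.re_sum]
  refine Finset.sum_congr rfl fun j _ => ?_
  rw [Complex.re_sum]
  refine Finset.sum_congr rfl fun i _ => ?_
  simp [Complex.normSq_apply, Complex.mul_re]

lemma ctm_nonneg {m n : ℕ} (A : Matrix (Fin m) (Fin n) ℂ) :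
    0 ≤ (Aᴴ * A).trace.re := by
  rw [trace_re_ctm]
  exact Finset.sum_nonneg fun j _ => Finset.sum_nonneg fun i _ => Complex.normSq_nonneg _

lemma ctm_eq_zero {m n : ℕ} (A : Matrix (Fin m) (Fin n) ℂ)
    (h : (Aᴴ * A).trace.re = 0) : A = 0 := by
  rw [trace_re_ctm] at h
  ext i j
  have := (Finset.sum_eq_zero_iff_of_nonneg (fun j _ => Finset.sum_nonneg
    (fun i _ => Complex.normSq_nonneg _))).mp h j (Finset.mem_univ j)
  have := (Finset.sum_eq_zero_iff_of_nonneg (fun i _ => Complex.normSq_nonneg _)).mp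
    this i (Finset.mem_univ i)
  simpa using Complex.normSq_eq_zero.mp this

open scoped MatrixOrder in
lemma exists_sqrt_psd {n : ℕ} {G : Matrix (Fin n) (Fin n) ℂ} (hG : G.PosSemidef) :
    ∃ S : Matrix (Fin n) (Fin n) ℂ, S.PosSemidef ∧ S * S = G :=
  ⟨CFC.sqrt G, (CFC.sqrt_nonneg G).posSemidef, CFC.sqrt_mul_sqrt_self G hG.nonneg⟩

theorem stmt14 (R NT : ℕ) (hR : 1 ≤ R) (M : Fin R → ℕ)
    (H : (i : Fin R) → Matrix (Fin (M i)) (Fin NT) ℂ)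
    (Ps : ℝ) (hPs : 0 < Ps)
    (U : Set (Fin R → ℝ))
    (hU : U = {w : Fin R → ℝ | ∃ G : Matrix (Fin NT) (Fin NT) ℂ,
      G.PosSemidef ∧ G.trace.re ≤ Ps ∧ ∀ i, w i = (((H i)ᴴ * H i * G).trace).re})
    (w : Fin R → ℝ) (hw : w ∈ U) (hw0 : w ≠ 0)
    (hPareto : ¬ ∃ w' ∈ U, (∀ i, w i ≤ w' i) ∧ w' ≠ w) :
    ∀ G : Matrix (Fin NT) (Fin NT) ℂ,
      G.PosSemidef → G.trace.re ≤ Ps →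
      (∀ i, (((H i)ᴴ * H i * G).trace).re = w i) →
      G.trace.re = Ps := by
  intro G hG hle heq
  by_contra hne
  have hlt : G.trace.re < Ps := lt_of_le_of_ne hle hne
  obtain ⟨S, hS', hSS'⟩ := exists_sqrt_psd hG
  have hS : S.PosSemidef := hS'
  have hSS : S * S = G := hSS'
  have hSH : Sᴴ = S := hS.1
  -- key identity: HᴴH G = trace-cyclic of (H S)ᴴ (H S)
  have key : ∀ i : Fin R, (((H i)ᴴ * H i * G).trace) = (((H i * S)ᴴ * (H i * S)).trace) := by
    intro i
    have h1 : (H i * S)ᴴ * (H i * S) = S * ((H i)ᴴ * H i) * S := by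
      rw [Matrix.conjTranspose_mul, hSH]
      simp [Matrix.mul_assoc]
    rw [h1, Matrix.trace_mul_comm (S * ((H i)ᴴ * H i)) S, ← Matrix.mul_assoc, hSS,
      Matrix.trace_mul_comm]
  -- trace of G as Frobenius of S
  have hGtr : G.trace = (Sᴴ * S).trace := by rw [hSH, hSS]
  have hwnn : ∀ i, 0 ≤ w i := by
    intro i
    rw [← heq i, key i]
    exact ctm_nonneg _
  have htnn : 0 ≤ G.trace.re := by rw [hGtr]; exact ctm_nonneg _
  rcases eq_or_lt_of_le htnn with h0 | hpos
  · -- trace zero ⇒ S = 0 ⇒ w = 0, contradiction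
    have hS0 : S = 0 := ctm_eq_zero _ (by rw [← hGtr, ← h0])
    apply hw0
    funext i
    rw [← heq i, key i, hS0]
    simp
  · -- scale up
    set t := G.trace.re with ht
    set c : ℝ := Ps / t with hc
    have hc1 : 1 < c := (one_lt_div hpos).mpr hlt
    have hct : c * t = Ps := div_mul_cancel₀ Ps (ne_of_gt hpos)
    have hG' : ((c : ℂ) • G).PosSemidef := by
      refine Matrix.PosSemidef.of_dotProduct_mulVec_nonneg ?_ fun x => ?_
      · unfold Matrix.IsHermitian
        rw [conjTranspose_smul, hG.1]
        norm_num
      · rw [Matrix.smul_mulVec, dotProduct_smul, smul_eq_mul]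
        exact mul_nonneg (by positivity) (hG.dotProduct_mulVec_nonneg x)
    have htr' : ((c : ℂ) • G).trace.re = Ps := by
      rw [Matrix.trace_smul, smul_eq_mul]
      simp only [Complex.mul_re, Complex.ofReal_re, Complex.ofReal_im]
      simp [← ht, hct]
    apply hPareto
    refine ⟨fun i => c * w i, ?_, fun i => ?_, ?_⟩
    · rw [hU]
      refine ⟨(c : ℂ) • G, hG', le_of_eq htr', fun i => ?_⟩
      rw [mul_smul_comm, Matrix.trace_smul, smul_eq_mul]
      simp only [Complex.mul_re, Complex.ofReal_re, Complex.ofReal_im]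
      simp [heq i]
    · show w i ≤ c * w i
      nlinarith [hwnn i]
    · intro hcontra
      obtain ⟨i, hi⟩ : ∃ i, w i ≠ 0 := by
        by_contra h
        push_neg at h
        exact hw0 (funext h)
      have := congrFun hcontra i
      have hwi : 0 < w i := lt_of_le_of_ne (hwnn i) (Ne.symm hi)
      nlinarith
end
end

section
/- Optimal source beamforming for a single relay (Remark 3, case R = 1): Let R = 1, let H_1 ∈ ℂ^{M_1×N_T} be nonzero, let λ_max be the largest eigenvalue of the Hermitian matrix H_1ᴴ H_1, let v ∈ ℂ^{N_T} be a unit eigenvector of H_1ᴴ H_1 with eigenvalue λ_max, and set g^♯ := √(P_s) v. Assume f̃_1 ≠ 0 and 0 ≤ ε_1 ≤ ‖f̃_1‖₂. Then g^♯ attains the supremum: for every g ∈ ℂ^{N_T} with ‖g‖₂² ≤ P_s, SNR₁(‖H_1 g‖₂²) ≤ SNR₁(‖H_1 g^♯‖₂²) = SNR₁(P_s λ_max), where SNR₁(w) := sup over real c with 0 ≤ c ≤ √(P_1/(σ_R² + w)) of min over a ∈ {‖f̃_1‖₂ − ε_1, ‖f̃_1‖₂ + ε_1} of (a c √w)² /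 (σ_R² a² c² + σ_D²). -/
open Matrix
open scoped ComplexOrder

noncomputable section

/-- The single-relay worst-case SNR as a function of the effective channel
gain `w`, optimized over the scalar power allocation factor `c`. -/
def SNR1 (σR2 σD2 P1 φ1 ε1 : ℝ) (w : ℝ) : ℝ :=
  sSup {s : ℝ | ∃ c : ℝ, 0 ≤ c ∧ c ≤ Real.sqrt (P1 / (σR2 + w)) ∧
    s = min
      (((φ1 - ε1) * c * Real.sqrt w) ^ 2 / (σR2 * (φ1 - ε1) ^ 2 * c ^ 2 + σD2))
      (((φ1 + ε1) * c * Real.sqrt w) ^ 2 / (σR2 * (φ1 + ε1) ^ 2 * c ^ 2 + σD2))}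

lemma dot_self_aux {m : ℕ} (z : Fin m → ℂ) :
    star z ⬝ᵥ z = ((∑ j, ‖z j‖ ^ 2 : ℝ) : ℂ) := by
  simp only [dotProduct, Pi.star_apply, Complex.star_def]
  push_cast
  refine Finset.sum_congr rfl fun j _ => ?_
  rw [mul_comm, Complex.mul_conj]
  simp [Complex.normSq_eq_norm_sq]

lemma dot_self_re {m : ℕ} (z : Fin m → ℂ) : (star z ⬝ᵥ z).re = ∑ j, ‖z j‖ ^ 2 := by
  rw [dot_self_aux, Complex.ofReal_re]

lemma quad_eq {M N : ℕ} (H : Matrix (Fin M) (Fin N) ℂ) (g : Fin N → ℂ) :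
    ∑ j, ‖∑ k, H j k * g k‖ ^ 2 = (star g ⬝ᵥ ((Hᴴ * H) *ᵥ g)).re := by
  rw [← mulVec_mulVec, dotProduct_mulVec, ← star_mulVec, dot_self_re]
  refine Finset.sum_congr rfl fun j _ => ?_
  simp [mulVec, dotProduct]

lemma re_conj_smul (t : ℝ) (z : ℂ) : ((starRingEnd ℂ) z * ((t : ℂ) * z)).re = t * ‖z‖ ^ 2 := by
  rw [show (starRingEnd ℂ) z * ((t : ℂ) * z) = (t : ℂ) * (z * (starRingEnd ℂ) z) from by ring,
    Complex.mul_conj, ← Complex.ofReal_mul, Complex.ofReal_re]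
  simp [Complex.normSq_eq_norm_sq]

lemma quad_le_lam {N : ℕ} (A : Matrix (Fin N) (Fin N) ℂ) (hA : A.IsHermitian) (lam : ℝ)
    (hle : ∀ i, hA.eigenvalues i ≤ lam) (g : Fin N → ℂ) :
    (star g ⬝ᵥ (A *ᵥ g)).re ≤ lam * ∑ k, ‖g k‖ ^ 2 := by
  set U : Matrix (Fin N) (Fin N) ℂ := (Matrix.IsHermitian.eigenvectorUnitary hA : Matrix (Fin N) (Fin N) ℂ) with hUdef
  set y := star U *ᵥ g with hy
  have hU1 : U * star U = 1 := mem_unitaryGroup_iff.mp (Matrix.IsHermitian.eigenvectorUnitary hA).2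
  have hstar : star g ᵥ* U = star y := by
    rw [hy, star_mulVec, star_eq_conjTranspose, conjTranspose_conjTranspose]
  have hAg : star g ⬝ᵥ (A *ᵥ g)
      = star y ⬝ᵥ ((diagonal (RCLike.ofReal ∘ hA.eigenvalues) : Matrix (Fin N) (Fin N) ℂ) *ᵥ y) := by
    conv_lhs => rw [hA.spectral_theorem, Unitary.conjStarAlgAut_apply]
    rw [← mulVec_mulVec, ← mulVec_mulVec, dotProduct_mulVec, hstar]
  have hyy : (star y ⬝ᵥ y) = star g ⬝ᵥ g := by
    rw [← hstar, hy, dotProduct_mulVec, vecMul_vecMul, hU1, vecMul_one]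
  have hdiag : (star y ⬝ᵥ ((diagonal (RCLike.ofReal ∘ hA.eigenvalues) : Matrix (Fin N) (Fin N) ℂ) *ᵥ y)).re
      = ∑ i, hA.eigenvalues i * ‖y i‖ ^ 2 := by
    rw [dotProduct, Complex.re_sum]
    refine Finset.sum_congr rfl fun i _ => ?_
    rw [mulVec_diagonal]
    simp only [Pi.star_apply, Complex.star_def, Function.comp_apply]
    exact re_conj_smul _ _
  calc (star g ⬝ᵥ (A *ᵥ g)).re = ∑ i, hA.eigenvalues i * ‖y i‖ ^ 2 := by rw [hAg, hdiag]
    _ ≤ ∑ i, lam * ‖y i‖ ^ 2 := Finset.sum_le_sum fun i _ =>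
        mul_le_mul_of_nonneg_right (hle i) (by positivity)
    _ = lam * ∑ i, ‖y i‖ ^ 2 := by rw [Finset.mul_sum]
    _ = lam * ∑ k, ‖g k‖ ^ 2 := by rw [← dot_self_re, hyy, dot_self_re]

lemma term_le (σR2 σD2 a c w : ℝ) (hσR : 0 < σR2) (hσD : 0 < σD2) (hw : 0 ≤ w) :
    (a * c * Real.sqrt w) ^ 2 / (σR2 * a ^ 2 * c ^ 2 + σD2) ≤ w / σR2 := by
  rw [mul_pow, mul_pow, Real.sq_sqrt hw, div_le_div_iff₀ (by positivity) hσR]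
  nlinarith [mul_nonneg (mul_nonneg hw (sq_nonneg a)) (sq_nonneg c), mul_nonneg hw hσD.le]

lemma term_mono (σR2 σD2 a c : ℝ) {w w' : ℝ} (hσR : 0 < σR2) (hσD : 0 < σD2)
    (hw : 0 ≤ w) (hww : w ≤ w') :
    (a * c * Real.sqrt w) ^ 2 / (σR2 * a ^ 2 * c ^ 2 + σD2) ≤
      (a * (c * Real.sqrt ((σR2 + w) / (σR2 + w'))) * Real.sqrt w') ^ 2 /
        (σR2 * a ^ 2 * (c * Real.sqrt ((σR2 + w) / (σR2 + w'))) ^ 2 + σD2) := by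
  have hA : 0 < σR2 + w := by linarith
  have hA' : 0 < σR2 + w' := by linarith
  have hw' : 0 ≤ w' := hw.trans hww
  set r := (σR2 + w) / (σR2 + w') with hrdef
  have hr0 : 0 ≤ r := by positivity
  have hsr : Real.sqrt r ^ 2 = r := Real.sq_sqrt hr0
  have hrw : w ≤ r * w' := by
    rw [hrdef, div_mul_eq_mul_div, le_div_iff₀ hA']; nlinarith
  have h1 : (a * c * Real.sqrt w) ^ 2 = (a ^ 2 * c ^ 2) * w := by
    rw [mul_pow, mul_pow, Real.sq_sqrt hw]
  have h2 : (a * (c * Real.sqrt r) * Real.sqrt w') ^ 2 = (a ^ 2 * c ^ 2) * r * w' := by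
    rw [mul_pow, mul_pow, mul_pow, Real.sq_sqrt hw', hsr]; ring
  have h3 : σR2 * a ^ 2 * (c * Real.sqrt r) ^ 2 + σD2 = σR2 * ((a ^ 2 * c ^ 2) * r) + σD2 := by
    rw [mul_pow, hsr]; ring
  have h4 : σR2 * a ^ 2 * c ^ 2 + σD2 = σR2 * (a ^ 2 * c ^ 2) + σD2 := by ring
  rw [h1, h2, h3, h4]
  set K := a ^ 2 * c ^ 2 with hKdef
  have hK0 : 0 ≤ K := by positivity
  rw [div_le_div_iff₀ (by positivity) (by positivity)]
  nlinarith [mul_nonneg (mul_nonneg (mul_nonneg hσR.le (sq_nonneg K)) hr0) (sub_nonneg.2 hww),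
    mul_nonneg (mul_nonneg hσD.le hK0) (sub_nonneg.2 hrw)]

lemma snr1_mono (σR2 σD2 P1 φ1 ε1 : ℝ) (hσR : 0 < σR2) (hσD : 0 < σD2) (hP1 : 0 < P1)
    {w w' : ℝ} (hw : 0 ≤ w) (hww : w ≤ w') :
    SNR1 σR2 σD2 P1 φ1 ε1 w ≤ SNR1 σR2 σD2 P1 φ1 ε1 w' := by
  have hw' : 0 ≤ w' := hw.trans hww
  have hA : 0 < σR2 + w := by linarith
  have hA' : 0 < σR2 + w' := by linarith
  unfold SNR1
  have hne : ∀ u : ℝ, (0:ℝ) ∈ {s : ℝ | ∃ c : ℝ, 0 ≤ c ∧ c ≤ Real.sqrt (P1 / (σR2 + u)) ∧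
      s = min
        (((φ1 - ε1) * c * Real.sqrt u) ^ 2 / (σR2 * (φ1 - ε1) ^ 2 * c ^ 2 + σD2))
        (((φ1 + ε1) * c * Real.sqrt u) ^ 2 / (σR2 * (φ1 + ε1) ^ 2 * c ^ 2 + σD2))} := by
    intro u
    exact ⟨0, le_rfl, Real.sqrt_nonneg _, by simp⟩
  have hbdd : BddAbove {s : ℝ | ∃ c : ℝ, 0 ≤ c ∧ c ≤ Real.sqrt (P1 / (σR2 + w')) ∧
      s = min
        (((φ1 - ε1) * c * Real.sqrt w') ^ 2 / (σR2 * (φ1 - ε1) ^ 2 * c ^ 2 + σD2))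
        (((φ1 + ε1) * c * Real.sqrt w') ^ 2 / (σR2 * (φ1 + ε1) ^ 2 * c ^ 2 + σD2))} := by
    refine ⟨w' / σR2, fun s hs => ?_⟩
    obtain ⟨c, _, _, rfl⟩ := hs
    exact le_trans (min_le_left _ _) (term_le σR2 σD2 _ c w' hσR hσD hw')
  refine csSup_le ⟨0, hne w⟩ fun s hs => ?_
  obtain ⟨c, hc0, hc1, rfl⟩ := hs
  set c' := c * Real.sqrt ((σR2 + w) / (σR2 + w')) with hc'
  have hc'0 : 0 ≤ c' := mul_nonneg hc0 (Real.sqrt_nonneg _)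
  have hc'1 : c' ≤ Real.sqrt (P1 / (σR2 + w')) := by
    have h2 : c' ≤ Real.sqrt (P1 / (σR2 + w)) * Real.sqrt ((σR2 + w) / (σR2 + w')) :=
      mul_le_mul_of_nonneg_right hc1 (Real.sqrt_nonneg _)
    refine h2.trans (le_of_eq ?_)
    rw [← Real.sqrt_mul (div_nonneg hP1.le hA.le)]
    congr 1
    field_simp
  have hmem : min
      (((φ1 - ε1) * c' * Real.sqrt w') ^ 2 / (σR2 * (φ1 - ε1) ^ 2 * c' ^ 2 + σD2))
      (((φ1 + ε1) * c' * Real.sqrt w') ^ 2 / (σR2 * (φ1 + ε1) ^ 2 * c' ^ 2 + σD2)) ∈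
      {s : ℝ | ∃ c : ℝ, 0 ≤ c ∧ c ≤ Real.sqrt (P1 / (σR2 + w')) ∧
        s = min
          (((φ1 - ε1) * c * Real.sqrt w') ^ 2 / (σR2 * (φ1 - ε1) ^ 2 * c ^ 2 + σD2))
          (((φ1 + ε1) * c * Real.sqrt w') ^ 2 / (σR2 * (φ1 + ε1) ^ 2 * c ^ 2 + σD2))} :=
    ⟨c', hc'0, hc'1, rfl⟩
  refine le_trans ?_ (le_csSup hbdd hmem)
  exact min_le_min (term_mono σR2 σD2 _ c hσR hσD hw hww)
    (term_mono σR2 σD2 _ c hσR hσD hw hww)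

theorem stmt16 (NT M1 : ℕ)
    (H1 : Matrix (Fin M1) (Fin NT) ℂ) (hH1 : H1 ≠ 0)
    (ftil1 : Fin M1 → ℂ) (ε1 : ℝ)
    (σR2 σD2 : ℝ) (hσR : 0 < σR2) (hσD : 0 < σD2)
    (P1 Ps : ℝ) (hP1 : 0 < P1) (hPs : 0 < Ps)
    (hf : ftil1 ≠ 0) (hε : 0 ≤ ε1 ∧ ε1 ≤ vnorm2 ftil1)
    (lamMax : ℝ) (v : Fin NT → ℂ)
    (hv : (∑ k, ‖v k‖ ^ 2) = 1)
    (heig : (H1ᴴ * H1).mulVec v = (lamMax : ℂ) • v)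
    (hmax : ∀ (t : ℝ) (v' : Fin NT → ℂ), v' ≠ 0 →
      (H1ᴴ * H1).mulVec v' = (t : ℂ) • v' → t ≤ lamMax)
    (gs : Fin NT → ℂ) (hgs : gs = fun k => (Real.sqrt Ps : ℂ) * v k) :
    (∀ g : Fin NT → ℂ, (∑ k, ‖g k‖ ^ 2) ≤ Ps →
      SNR1 σR2 σD2 P1 (vnorm2 ftil1) ε1 (∑ j, ‖∑ k, H1 j k * g k‖ ^ 2) ≤
        SNR1 σR2 σD2 P1 (vnorm2 ftil1) ε1 (∑ j, ‖∑ k, H1 j k * gs k‖ ^ 2)) ∧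
    SNR1 σR2 σD2 P1 (vnorm2 ftil1) ε1 (∑ j, ‖∑ k, H1 j k * gs k‖ ^ 2) =
      SNR1 σR2 σD2 P1 (vnorm2 ftil1) ε1 (Ps * lamMax) := by
  have hA : (H1ᴴ * H1).IsHermitian := isHermitian_conjTranspose_mul_self H1
  -- every eigenvalue is at most lamMax
  have eig_le : ∀ i, hA.eigenvalues i ≤ lamMax := by
    intro i
    refine hmax _ (⇑(hA.eigenvectorBasis i)) ?_ ?_
    · intro h0
      have h1 : ‖hA.eigenvectorBasis i‖ = 1 := hA.eigenvectorBasis.orthonormal.1 i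
      have h2 : ∀ j, hA.eigenvectorBasis i j = 0 := fun j => congrFun h0 j
      rw [EuclideanSpace.norm_eq] at h1
      simp [h2] at h1
    · rw [show (H1ᴴ * H1).mulVec (⇑(hA.eigenvectorBasis i))
          = hA.eigenvalues i • (⇑(hA.eigenvectorBasis i)) from hA.mulVec_eigenvectorBasis i]
      funext k
      simp [Complex.real_smul]
  -- the quadratic form at v equals lamMax
  have hvlam : (star v ⬝ᵥ ((H1ᴴ * H1) *ᵥ v)).re = lamMax := by
    rw [show (H1ᴴ * H1) *ᵥ v = (lamMax : ℂ) • v from heig, dotProduct_smul, smul_eq_mul,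
      dot_self_aux, hv]
    simp
  -- value of the objective at gs
  have hgs_sum : (∑ j, ‖∑ k, H1 j k * gs k‖ ^ 2) = Ps * lamMax := by
    subst hgs
    have hstep : ∀ j, ∑ k, H1 j k * ((Real.sqrt Ps : ℂ) * v k)
        = (Real.sqrt Ps : ℂ) * ∑ k, H1 j k * v k := by
      intro j
      rw [Finset.mul_sum]
      exact Finset.sum_congr rfl fun k _ => by ring
    calc (∑ j, ‖∑ k, H1 j k * ((Real.sqrt Ps : ℂ) * v k)‖ ^ 2)
        = ∑ j, Ps * ‖∑ k, H1 j k * v k‖ ^ 2 := by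
          refine Finset.sum_congr rfl fun j _ => ?_
          rw [hstep j, norm_mul, mul_pow, Complex.norm_real, Real.norm_eq_abs,
            abs_of_nonneg (Real.sqrt_nonneg _), Real.sq_sqrt hPs.le]
      _ = Ps * ∑ j, ‖∑ k, H1 j k * v k‖ ^ 2 := by rw [Finset.mul_sum]
      _ = Ps * lamMax := by rw [quad_eq, hvlam]
  have hlam0 : 0 ≤ lamMax := by
    rw [← hvlam, ← quad_eq]
    positivity
  constructor
  · intro g hg
    rw [hgs_sum]
    refine snr1_mono _ _ _ _ _ hσR hσD hP1 (by positivity) ?_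
    calc (∑ j, ‖∑ k, H1 j k * g k‖ ^ 2)
        = (star g ⬝ᵥ ((H1ᴴ * H1) *ᵥ g)).re := quad_eq H1 g
      _ ≤ lamMax * ∑ k, ‖g k‖ ^ 2 := quad_le_lam _ hA lamMax eig_le g
      _ ≤ lamMax * Ps := mul_le_mul_of_nonneg_left hg hlam0
      _ = Ps * lamMax := mul_comm _ _
  · rw [hgs_sum]
end
end
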